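/- arXiv:2112.00217 — 4 statements merged into one kernel-verified Lean document; each statement's English description precedes it below -/
import Mathlib

section
/- Let n ≥ 1, 0 < λ < 1 and 0 < p < n/(1+nλ). Let Ω ⊂ ℝ^n be a bounded open set and S ⊂ Ω a measurable set of positive Lebesgue measure. Then there exists NO constant C such that ‖ w − ( (1/|S|) ∫_S w^{1/λ} )^{λ} ‖_{L^p(Ω)} ≤ C ‖∇w‖_{L^p(Ω)} holds for all nonnegative Lipschitz functions w on Ω. Equivalently, there exists a sequence of nonnegative Lipschitz functions w_k with ‖∇w_k‖_{L^p(Ω)} → 0 while ‖ w_k − ((1/|S|)∫_S w_k^{1/λ})^{λ} ‖_{L^p(Ω)} stays bounded below by a positive constant. -/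
open MeasureTheory Real Set

noncomputable section

open Metric ENNReal

lemma spike_lipschitz' {E : Type*} [PseudoMetricSpace E] (x₀ : E) {r h : ℝ}
    (hr : 0 < r) (hh : 0 ≤ h) :
    LipschitzWith (Real.toNNReal (h / r)) (fun x => h * max 0 (1 - dist x x₀ / r)) := by
  apply LipschitzWith.of_dist_le_mul
  intro x y
  simp only [Real.dist_eq, Real.coe_toNNReal _ (by positivity : (0:ℝ) ≤ h / r)]
  have h1 : |max 0 (1 - dist x x₀ / r) - max 0 (1 - dist y x₀ / r)|
      ≤ |dist x x₀ / r - dist y x₀ / r| := by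
    rw [max_comm 0 _, max_comm 0 _]
    calc |max (1 - dist x x₀ / r) 0 - max (1 - dist y x₀ / r) 0|
        ≤ |(1 - dist x x₀ / r) - (1 - dist y x₀ / r)| := abs_max_sub_max_le_abs _ _ _
      _ = |dist x x₀ / r - dist y x₀ / r| := by rw [← abs_neg]; ring_nf
  calc |h * max 0 (1 - dist x x₀ / r) - h * max 0 (1 - dist y x₀ / r)|
      = h * |max 0 (1 - dist x x₀ / r) - max 0 (1 - dist y x₀ / r)| := by
        rw [← mul_sub, abs_mul, abs_of_nonneg hh]
    _ ≤ h * |dist x x₀ / r - dist y x₀ / r| := mul_le_mul_of_nonneg_left h1 hh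
    _ = (h / r) * |dist x x₀ - dist y x₀| := by
        rw [div_sub_div_same, abs_div, abs_of_pos hr]; ring
    _ ≤ (h / r) * dist x y :=
        mul_le_mul_of_nonneg_left (abs_dist_sub_le _ _ _) (by positivity)

lemma spike_fderiv_zero' {E : Type*} [NormedAddCommGroup E] [NormedSpace ℝ E]
    (x₀ : E) {r h : ℝ} (hr : 0 < r) {x : E} (hx : x ∉ closedBall x₀ r) :
    fderiv ℝ (fun x => h * max 0 (1 - dist x x₀ / r)) x = 0 := by
  have hd : r < dist x x₀ := by simpa [Metric.mem_closedBall, not_le] using hx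
  have heq : (fun x => h * max 0 (1 - dist x x₀ / r)) =ᶠ[nhds x] (fun _ => (0:ℝ)) := by
    have hmem : {y : E | r < dist y x₀} ∈ nhds x :=
      (isOpen_lt continuous_const (continuous_id.dist continuous_const)).mem_nhds hd
    filter_upwards [hmem] with y hy
    have h2 : 1 - dist y x₀ / r ≤ 0 := by
      have : 1 < dist y x₀ / r := (one_lt_div hr).2 hy
      linarith
    simp [max_eq_left h2]
  rw [Filter.EventuallyEq.fderiv_eq heq]
  exact fderiv_const_apply 0

lemma integrableOn_of_bounded'' {E : Type*} [MeasurableSpace E] {μ : Measure E}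
    {s : Set E} (hs : μ s ≠ ⊤) {f : E → ℝ}
    (hf : AEStronglyMeasurable f (μ.restrict s)) {M : ℝ} (hM : ∀ x, |f x| ≤ M) :
    IntegrableOn f s μ := by
  haveI : IsFiniteMeasure (μ.restrict s) :=
    ⟨by rw [Measure.restrict_apply_univ]; exact lt_top_iff_ne_top.2 hs⟩
  exact ⟨hf, HasFiniteIntegral.of_bounded (C := M)
    (Filter.Eventually.of_forall fun x => by simpa [Real.norm_eq_abs] using hM x)⟩

/-- Failure of the nonlinear Poincaré inequality for `0 < λ < 1` and
`0 < p < n/(1+nλ)`: no constant `C` works for all nonnegative Lipschitz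
functions. -/
theorem nonlinear_poincare_fails_small_p
    (n : ℕ) (hn : 1 ≤ n) (lam p : ℝ)
    (hlam0 : 0 < lam) (hlam1 : lam < 1)
    (hp0 : 0 < p) (hp1 : p < (n : ℝ) / (1 + n * lam))
    (Ω : Set (EuclideanSpace ℝ (Fin n)))
    (hΩo : IsOpen Ω) (hΩb : Bornology.IsBounded Ω)
    (S : Set (EuclideanSpace ℝ (Fin n))) (hSΩ : S ⊆ Ω)
    (hSm : MeasurableSet S) (hSpos : 0 < volume S) :
    ¬ ∃ C : ℝ, ∀ w : EuclideanSpace ℝ (Fin n) → ℝ,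
      (∃ K : NNReal, LipschitzWith K w) → (∀ x ∈ Ω, 0 ≤ w x) →
      (∫ x in Ω, |w x - (⨍ y in S, w y ^ (1 / lam)) ^ lam| ^ p) ^ (1 / p) ≤
        C * (∫ x in Ω, ‖fderiv ℝ w x‖ ^ p) ^ (1 / p) := by
  rintro ⟨C, hC⟩
  have hn' : (0:ℝ) < n := by exact_mod_cast Nat.lt_of_lt_of_le Nat.zero_lt_one hn
  have hden : (0:ℝ) < 1 + n * lam := by positivity
  have hpn : p * (1 + n * lam) < n := by
    rw [lt_div_iff₀ hden] at hp1; exact hp1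
  set e : ℝ := n - p * (1 + n * lam) with he
  have he0 : 0 < e := by simp only [he]; linarith
  -- measures
  have hΩfin : volume Ω ≠ ⊤ := hΩb.measure_lt_top.ne
  have hSfin : volume S ≠ ⊤ := ((measure_mono hSΩ).trans_lt hΩb.measure_lt_top).ne
  have hΩpos : 0 < volume Ω := lt_of_lt_of_le hSpos (measure_mono hSΩ)
  set V : ℝ := (volume S).toReal with hV
  have hVpos : 0 < V := ENNReal.toReal_pos hSpos.ne' hSfin
  set κ : ℝ := (volume (ball (0 : EuclideanSpace ℝ (Fin n)) 1)).toReal with hκ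
  have hκpos : 0 < κ :=
    ENNReal.toReal_pos (measure_ball_pos _ _ one_pos).ne' measure_ball_lt_top.ne
  set c₀ : ℝ := κ / ((2:ℝ) ^ (1/lam) * 2 ^ n * 2 * V) with hc₀
  have h2pow : (0:ℝ) < (2:ℝ) ^ (1/lam) := Real.rpow_pos_of_pos two_pos _
  have hc₀pos : 0 < c₀ := by
    apply div_pos hκpos; positivity
  set m₀ : ℝ := c₀ ^ lam with hm₀def
  have hm₀ : 0 < m₀ := Real.rpow_pos_of_pos hc₀pos lam
  have hΩtr : 0 < (volume Ω).toReal := ENNReal.toReal_pos hΩpos.ne' hΩfin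
  set L : ℝ := m₀ ^ p * ((volume Ω).toReal / 2) with hL
  have hLpos : 0 < L := by
    apply mul_pos (Real.rpow_pos_of_pos hm₀ p); positivity
  -- density point
  obtain ⟨x₀, hx₀S, hx₀⟩ : ∃ x ∈ S, Filter.Tendsto
      (fun ρ => volume (S ∩ closedBall x ρ) / volume (closedBall x ρ))
      (nhdsWithin 0 (Ioi 0)) (nhds 1) := by
    have h1 := Besicovitch.ae_tendsto_measure_inter_div_of_measurableSet
      (volume : Measure (EuclideanSpace ℝ (Fin n))) hSm
    have h2 : ∀ᵐ x ∂(volume.restrict S), x ∈ S := ae_restrict_mem hSm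
    have h3 := (ae_restrict_of_ae h1).and h2
    have hne : (volume.restrict S) ≠ 0 := by
      intro h0
      rw [Measure.restrict_eq_zero] at h0
      exact hSpos.ne' h0
    haveI : (ae (volume.restrict S)).NeBot := ae_neBot.2 hne
    obtain ⟨x, hx⟩ := h3.exists
    refine ⟨x, hx.2, ?_⟩
    have := hx.1
    rwa [Set.indicator_of_mem hx.2, Pi.one_apply] at this
  -- eventual facts
  have hdens : ∀ᶠ ρ in nhdsWithin 0 (Ioi 0),
      2⁻¹ * volume (closedBall x₀ ρ) ≤ volume (S ∩ closedBall x₀ ρ) := by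
    have hev := hx₀.eventually (lt_mem_nhds (by norm_num : (2⁻¹ : ℝ≥0∞) < 1))
    filter_upwards [hev, self_mem_nhdsWithin] with ρ hρ hρ0
    have hρ0' : (0:ℝ) < ρ := hρ0
    have := ENNReal.mul_lt_of_lt_div hρ
    exact this.le
  have hsmall : ∀ᶠ ρ in nhdsWithin 0 (Ioi 0),
      volume (closedBall x₀ ρ) ≤ volume Ω / 2 := by
    have htend : Filter.Tendsto (fun ρ : ℝ => volume (closedBall x₀ ρ))
        (nhdsWithin 0 (Ioi 0)) (nhds 0) := by
      have heq : ∀ᶠ ρ in nhdsWithin (0:ℝ) (Ioi 0),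
          ENNReal.ofReal (ρ ^ n) * volume (ball (0 : EuclideanSpace ℝ (Fin n)) 1)
            = volume (closedBall x₀ ρ) := by
        filter_upwards [self_mem_nhdsWithin] with ρ hρ
        rw [Measure.addHaar_closedBall _ _ (le_of_lt hρ), finrank_euclideanSpace_fin]
      apply Filter.Tendsto.congr' heq
      have h0 : Filter.Tendsto (fun ρ : ℝ => ENNReal.ofReal (ρ ^ n))
          (nhdsWithin 0 (Ioi 0)) (nhds 0) := by
        have : Filter.Tendsto (fun ρ : ℝ => ρ ^ n) (nhds 0) (nhds 0) := by
          simpa [zero_pow (by omega : n ≠ 0)] using (continuous_pow n).tendsto (0:ℝ)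
        simpa using (ENNReal.tendsto_ofReal (this.mono_left nhdsWithin_le_nhds))
      simpa using ENNReal.Tendsto.mul_const h0
        (Or.inr measure_ball_lt_top.ne)
    have hpos2 : (0:ℝ≥0∞) < volume Ω / 2 := ENNReal.div_pos hΩpos.ne' (by norm_num)
    filter_upwards [htend.eventually (gt_mem_nhds hpos2)] with ρ hρ
    exact hρ.le
  have hCsmall : ∀ᶠ ρ in nhdsWithin (0:ℝ) (Ioi 0),
      |C| * (κ * ρ ^ e) ^ (1/p) < L ^ (1/p) := by
    have hcont : Filter.Tendsto (fun ρ : ℝ => |C| * (κ * ρ ^ e) ^ (1/p))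
        (nhdsWithin 0 (Ioi 0)) (nhds 0) := by
      have h1 : Filter.Tendsto (fun ρ : ℝ => ρ ^ e) (nhds 0) (nhds 0) := by
        have := (Real.continuousAt_rpow_const 0 e (Or.inr he0.le)).tendsto
        simpa [Real.zero_rpow he0.ne'] using this
      have h2 : Filter.Tendsto (fun ρ : ℝ => κ * ρ ^ e) (nhds 0) (nhds 0) := by
        simpa using h1.const_mul κ
      have h3 : Filter.Tendsto (fun ρ : ℝ => (κ * ρ ^ e) ^ (1/p)) (nhds 0) (nhds 0) := by
        have h4 := (Real.continuousAt_rpow_const 0 (1/p) (Or.inr (by positivity))).tendsto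
        have := h4.comp h2
        simpa [Function.comp_def, one_div, Real.zero_rpow (inv_ne_zero hp0.ne')] using this
      have h5 : Filter.Tendsto (fun ρ : ℝ => |C| * (κ * ρ ^ e) ^ (1/p)) (nhds 0) (nhds 0) := by
        simpa using h3.const_mul |C|
      exact h5.mono_left nhdsWithin_le_nhds
    exact hcont.eventually (gt_mem_nhds (Real.rpow_pos_of_pos hLpos _))
  have hhalf : Filter.Tendsto (fun ρ : ℝ => ρ / 2) (nhdsWithin 0 (Ioi 0))
      (nhdsWithin 0 (Ioi 0)) := by
    apply tendsto_nhdsWithin_of_tendsto_nhds_of_eventually_within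
    · have : Filter.Tendsto (fun ρ : ℝ => ρ / 2) (nhds 0) (nhds 0) := by
        simpa using (continuous_id.div_const (2:ℝ)).tendsto (0:ℝ)
      exact this.mono_left nhdsWithin_le_nhds
    · filter_upwards [self_mem_nhdsWithin] with ρ (hρ : (0:ℝ) < ρ)
      exact half_pos hρ
  obtain ⟨r, ⟨⟨hrd2, hrsm, hrCs⟩, hr0⟩⟩ :=
    (((hhalf.eventually hdens).and (hsmall.and hCsmall)).and self_mem_nhdsWithin).exists
  have hr0' : (0:ℝ) < r := hr0
  set h : ℝ := r ^ (-(lam * (n:ℝ))) with hhdef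
  have hhpos : 0 < h := Real.rpow_pos_of_pos hr0' _
  set w : EuclideanSpace ℝ (Fin n) → ℝ := fun x => h * max 0 (1 - dist x x₀ / r) with hwdef
  have hlip : LipschitzWith (Real.toNNReal (h / r)) w := spike_lipschitz' x₀ hr0' hhpos.le
  have hwcont : Continuous w := hlip.continuous
  have hw0 : ∀ x, 0 ≤ w x := fun x => mul_nonneg hhpos.le (le_max_left _ _)
  have hwle : ∀ x, w x ≤ h := by
    intro x
    have hd : 0 ≤ dist x x₀ / r := by positivity
    have h1 : max 0 (1 - dist x x₀ / r) ≤ 1 := max_le zero_le_one (by linarith)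
    calc w x ≤ h * 1 := mul_le_mul_of_nonneg_left h1 hhpos.le
      _ = h := mul_one h
  have hwzero : ∀ x, x ∉ closedBall x₀ r → w x = 0 := by
    intro x hx
    have hd : r < dist x x₀ := by simpa [Metric.mem_closedBall, not_le] using hx
    have h2 : 1 - dist x x₀ / r ≤ 0 := by
      have : 1 < dist x x₀ / r := (one_lt_div hr0').2 hd
      linarith
    simp [hwdef, max_eq_left h2]
  have hwge : ∀ x ∈ closedBall x₀ (r/2), h / 2 ≤ w x := by
    intro x hx
    have hd : dist x x₀ ≤ r / 2 := mem_closedBall.1 hx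
    have h2 : (1:ℝ)/2 ≤ 1 - dist x x₀ / r := by
      have : dist x x₀ / r ≤ 1/2 := by
        rw [div_le_iff₀ hr0']; linarith
      linarith
    calc h / 2 = h * (1/2) := by ring
      _ ≤ h * max 0 (1 - dist x x₀ / r) :=
          mul_le_mul_of_nonneg_left (le_max_of_le_right h2) hhpos.le
      _ = w x := rfl
  have hhpow : h ^ (1/lam) = ((r:ℝ) ^ n)⁻¹ := by
    rw [hhdef, ← Real.rpow_natCast r n, ← Real.rpow_neg hr0'.le, ← Real.rpow_mul hr0'.le]
    congr 1
    field_simp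
  -- Step A : lower bound on the average
  have hwm : AEStronglyMeasurable (fun y => w y ^ (1/lam)) (volume.restrict S) :=
    (hwcont.rpow_const (fun x => Or.inr (by positivity))).aestronglyMeasurable
  have hintS : IntegrableOn (fun y => w y ^ (1/lam)) S volume := by
    apply integrableOn_of_bounded'' hSfin hwm (M := h ^ (1/lam))
    intro x
    rw [abs_of_nonneg (Real.rpow_nonneg (hw0 x) _)]
    exact Real.rpow_le_rpow (hw0 x) (hwle x) (by positivity)
  have hintS2 : IntegrableOn (fun y => w y ^ (1/lam)) (S ∩ closedBall x₀ (r/2)) volume :=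
    hintS.mono_set inter_subset_left
  have hstep1 : (h/2) ^ (1/lam) * (volume (S ∩ closedBall x₀ (r/2))).toReal
      ≤ ∫ y in S, w y ^ (1/lam) := by
    have hsub : S ∩ closedBall x₀ (r/2) ⊆ S := inter_subset_left
    refine le_trans (setIntegral_ge_of_const_le_real (hSm.inter measurableSet_closedBall)
      ((measure_mono hsub).trans_lt hSfin.lt_top).ne
      (fun x hx => Real.rpow_le_rpow (by positivity) (hwge x hx.2) (by positivity))
      hintS2) ?_
    exact setIntegral_mono_set hintS
      (Filter.Eventually.of_forall fun x => Real.rpow_nonneg (hw0 x) _)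
      (HasSubset.Subset.eventuallyLE hsub)
  have hvol2 : ((r/2)^n * κ)/2 ≤ (volume (S ∩ closedBall x₀ (r/2))).toReal := by
    have hcb : volume (closedBall x₀ (r/2))
        = ENNReal.ofReal ((r/2)^n) * volume (ball (0 : EuclideanSpace ℝ (Fin n)) 1) := by
      rw [Measure.addHaar_closedBall _ _ (by positivity : (0:ℝ) ≤ r/2),
        finrank_euclideanSpace_fin]
    have hfin2 : volume (S ∩ closedBall x₀ (r/2)) ≠ ⊤ :=
      ((measure_mono inter_subset_left).trans_lt hSfin.lt_top).ne
    have h' := hrd2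
    rw [hcb] at h'
    calc ((r/2)^n * κ)/2
        = (2⁻¹ * (ENNReal.ofReal ((r/2)^n)
            * volume (ball (0 : EuclideanSpace ℝ (Fin n)) 1))).toReal := by
          rw [ENNReal.toReal_mul, ENNReal.toReal_mul,
            ENNReal.toReal_ofReal (by positivity : (0:ℝ) ≤ (r/2)^n)]
          simp only [ENNReal.toReal_inv, ENNReal.toReal_ofNat, ← hκ]
          ring
      _ ≤ _ := ENNReal.toReal_mono hfin2 h'
  have hkey : c₀ = V⁻¹ * ((h/2)^(1/lam) * (((r/2)^n * κ)/2)) := by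
    have hdr : (h/2)^(1/lam) = ((r:ℝ)^n)⁻¹ * ((2:ℝ)^(1/lam))⁻¹ := by
      rw [Real.div_rpow hhpos.le (by norm_num : (0:ℝ) ≤ 2), hhpow]
      rw [div_eq_mul_inv]
    rw [hdr, hc₀, div_pow]
    have h1 : ((r:ℝ)^n) ≠ 0 := by positivity
    have h2 : ((2:ℝ)^(1/lam)) ≠ 0 := h2pow.ne'
    have h3 : V ≠ 0 := hVpos.ne'
    field_simp
  have havg : c₀ ≤ ⨍ y in S, w y ^ (1/lam) := by
    rw [setAverage_eq, smul_eq_mul, measureReal_def, ← hV]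
    have hmul : (h/2)^(1/lam) * (((r/2)^n * κ)/2) ≤ ∫ y in S, w y ^ (1/lam) :=
      le_trans (mul_le_mul_of_nonneg_left hvol2 (Real.rpow_nonneg (by positivity) _)) hstep1
    rw [hkey]
    exact mul_le_mul_of_nonneg_left hmul (by positivity)
  set M : ℝ := (⨍ y in S, w y ^ (1/lam)) ^ lam with hMdef
  have hMm : m₀ ≤ M := Real.rpow_le_rpow hc₀pos.le havg hlam0.le
  have hMpos : 0 < M := lt_of_lt_of_le hm₀ hMm
  -- Step B : lower bound on the LHS integral
  have hFm : AEStronglyMeasurable (fun x => |w x - M| ^ p) (volume.restrict Ω) :=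
    (((hwcont.sub continuous_const).abs).rpow_const (fun x => Or.inr hp0.le)).aestronglyMeasurable
  have hFbd : ∀ x, |(|w x - M| ^ p)| ≤ (h + M) ^ p := by
    intro x
    rw [abs_of_nonneg (Real.rpow_nonneg (abs_nonneg _) _)]
    apply Real.rpow_le_rpow (abs_nonneg _) ?_ hp0.le
    calc |w x - M| ≤ |w x| + |M| := abs_sub _ _
      _ = w x + M := by rw [abs_of_nonneg (hw0 x), abs_of_pos hMpos]
      _ ≤ h + M := by linarith [hwle x]
  have hFint : IntegrableOn (fun x => |w x - M| ^ p) Ω volume :=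
    integrableOn_of_bounded'' hΩfin hFm hFbd
  have hB : L ≤ ∫ x in Ω, |w x - M| ^ p := by
    have hsub : Ω \ closedBall x₀ r ⊆ Ω := diff_subset
    have hfind : volume (Ω \ closedBall x₀ r) ≠ ⊤ :=
      ((measure_mono hsub).trans_lt hΩfin.lt_top).ne
    have h1 : m₀ ^ p * (volume (Ω \ closedBall x₀ r)).toReal
        ≤ ∫ x in Ω \ closedBall x₀ r, |w x - M| ^ p := by
      apply setIntegral_ge_of_const_le_real (hΩo.measurableSet.diff measurableSet_closedBall) hfind
        ?_ (hFint.mono_set hsub)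
      intro x hx
      rw [hwzero x hx.2, zero_sub, abs_neg, abs_of_pos hMpos]
      exact Real.rpow_le_rpow hm₀.le hMm hp0.le
    have h2 : ∫ x in Ω \ closedBall x₀ r, |w x - M| ^ p ≤ ∫ x in Ω, |w x - M| ^ p :=
      setIntegral_mono_set hFint
        (Filter.Eventually.of_forall fun x => Real.rpow_nonneg (abs_nonneg _) _)
        (HasSubset.Subset.eventuallyLE hsub)
    have h4 : volume Ω / 2 ≤ volume (Ω \ closedBall x₀ r) := by
      calc volume Ω / 2 = volume Ω - volume Ω / 2 := (ENNReal.sub_half hΩfin).symm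
        _ ≤ volume Ω - volume (closedBall x₀ r) := tsub_le_tsub_left hrsm _
        _ ≤ volume (Ω \ closedBall x₀ r) := le_measure_diff
    have h3 : (volume Ω).toReal / 2 ≤ (volume (Ω \ closedBall x₀ r)).toReal := by
      have := ENNReal.toReal_mono hfind h4
      rwa [ENNReal.toReal_div, ENNReal.toReal_ofNat] at this
    calc L = m₀ ^ p * ((volume Ω).toReal / 2) := hL
      _ ≤ m₀ ^ p * (volume (Ω \ closedBall x₀ r)).toReal :=
          mul_le_mul_of_nonneg_left h3 (Real.rpow_nonneg hm₀.le p)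
      _ ≤ _ := le_trans h1 h2
  -- Step C : upper bound on the RHS integral
  set K : ℝ := h / r with hKdef
  have hKpos : 0 < K := div_pos hhpos hr0'
  have hDle : ∀ x, ‖fderiv ℝ w x‖ ≤ K := by
    intro x
    have h1 := norm_fderiv_le_of_lipschitz (𝕜 := ℝ) (x₀ := x) hlip
    rwa [Real.coe_toNNReal _ (by positivity : (0:ℝ) ≤ h/r), ← hKdef] at h1
  have hGm : AEStronglyMeasurable (fun x => ‖fderiv ℝ w x‖ ^ p) (volume.restrict Ω) := by
    have hm := (measurable_fderiv ℝ w).norm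
    exact (((by fun_prop : Measurable (fun t : ℝ => t ^ p))).comp hm).aestronglyMeasurable
  have hGbd : ∀ x, |(‖fderiv ℝ w x‖ ^ p)| ≤ K ^ p := by
    intro x
    rw [abs_of_nonneg (Real.rpow_nonneg (norm_nonneg _) _)]
    exact Real.rpow_le_rpow (norm_nonneg _) (hDle x) hp0.le
  have hGint : IntegrableOn (fun x => ‖fderiv ℝ w x‖ ^ p) Ω volume :=
    integrableOn_of_bounded'' hΩfin hGm hGbd
  haveI : IsFiniteMeasure (volume.restrict Ω) :=
    ⟨by rw [Measure.restrict_apply_univ]; exact hΩfin.lt_top⟩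
  have hgi : Integrable (Set.indicator (closedBall x₀ r) (fun _ => K ^ p)) (volume.restrict Ω) :=
    (integrable_const _).indicator measurableSet_closedBall
  have hC4 : ∫ x in Ω, ‖fderiv ℝ w x‖ ^ p
      ≤ ∫ x in Ω, Set.indicator (closedBall x₀ r) (fun _ => K ^ p) x := by
    apply integral_mono hGint hgi
    intro x
    by_cases hx : x ∈ closedBall x₀ r
    · rw [Set.indicator_of_mem hx]
      exact Real.rpow_le_rpow (norm_nonneg _) (hDle x) hp0.le
    · rw [Set.indicator_of_notMem hx]
      have hz : fderiv ℝ w x = 0 := by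
        rw [hwdef]; exact spike_fderiv_zero' x₀ hr0' hx
      simp [hz, Real.zero_rpow hp0.ne']
  have hC5 : ∫ x in Ω, Set.indicator (closedBall x₀ r) (fun _ => K ^ p) x
      ≤ K ^ p * (r ^ n * κ) := by
    rw [setIntegral_indicator measurableSet_closedBall, setIntegral_const, smul_eq_mul]
    have hcb : (volume (Ω ∩ closedBall x₀ r)).toReal ≤ r ^ n * κ := by
      have h1 : volume (Ω ∩ closedBall x₀ r) ≤ volume (closedBall x₀ r) :=
        measure_mono inter_subset_right
      have h2 : volume (closedBall x₀ r)
          = ENNReal.ofReal (r ^ n) * volume (ball (0 : EuclideanSpace ℝ (Fin n)) 1) := by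
        rw [Measure.addHaar_closedBall _ _ hr0'.le, finrank_euclideanSpace_fin]
      have h1' : volume (Ω ∩ closedBall x₀ r)
          ≤ ENNReal.ofReal (r ^ n) * volume (ball (0 : EuclideanSpace ℝ (Fin n)) 1) :=
        h1.trans_eq h2
      have h3 := ENNReal.toReal_mono
        (ENNReal.mul_lt_top ENNReal.ofReal_lt_top measure_ball_lt_top).ne h1'
      rwa [ENNReal.toReal_mul, ENNReal.toReal_ofReal (by positivity : (0:ℝ) ≤ r ^ n), ← hκ]
        at h3
    calc (volume (Ω ∩ closedBall x₀ r)).toReal * K ^ p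
        ≤ (r ^ n * κ) * K ^ p :=
          mul_le_mul_of_nonneg_right hcb (Real.rpow_nonneg hKpos.le _)
      _ = K ^ p * (r ^ n * κ) := by ring
  have hC6 : K ^ p * (r ^ n * κ) = κ * r ^ e := by
    have hKeq : K = r ^ (-(lam * (n:ℝ)) - 1) := by
      rw [hKdef, hhdef, Real.rpow_sub hr0', Real.rpow_one]
    rw [hKeq, ← Real.rpow_natCast r n, ← Real.rpow_mul hr0'.le,
      show ((-(lam * (n:ℝ)) - 1) * p) = e - (n:ℝ) by rw [he]; ring,
      Real.rpow_sub hr0']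
    have h1 : r ^ ((n:ℝ)) ≠ 0 := (Real.rpow_pos_of_pos hr0' _).ne'
    field_simp
  -- conclusion
  have hmain := hC w ⟨_, hlip⟩ (fun x _ => hw0 x)
  rw [← hMdef] at hmain
  have hGnn : 0 ≤ ∫ x in Ω, ‖fderiv ℝ w x‖ ^ p :=
    setIntegral_nonneg hΩo.measurableSet fun x _ => Real.rpow_nonneg (norm_nonneg _) _
  have hRle : (∫ x in Ω, ‖fderiv ℝ w x‖ ^ p) ^ (1/p) ≤ (κ * r ^ e) ^ (1/p) :=
    Real.rpow_le_rpow hGnn (hC4.trans (hC5.trans_eq hC6)) (by positivity)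
  have hLle : L ^ (1/p) ≤ (∫ x in Ω, |w x - M| ^ p) ^ (1/p) :=
    Real.rpow_le_rpow hLpos.le hB (by positivity)
  have hfin2 : C * (∫ x in Ω, ‖fderiv ℝ w x‖ ^ p) ^ (1/p) ≤ |C| * (κ * r ^ e) ^ (1/p) :=
    calc C * (∫ x in Ω, ‖fderiv ℝ w x‖ ^ p) ^ (1/p)
        ≤ |C| * (∫ x in Ω, ‖fderiv ℝ w x‖ ^ p) ^ (1/p) :=
          mul_le_mul_of_nonneg_right (le_abs_self C) (Real.rpow_nonneg hGnn _)
      _ ≤ |C| * (κ * r ^ e) ^ (1/p) := mul_le_mul_of_nonneg_left hRle (abs_nonneg C)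
  exact absurd (lt_of_le_of_lt ((hLle.trans hmain).trans hfin2) hrCs) (lt_irrefl _)


end
end

section
/- Let n ≥ 1, 0 < λ < ∞ and 0 < p < 1, and let Ω = S = [−1,1]^n. Then there exists NO constant C such that ‖ w − ( (1/|S|) ∫_S w^{1/λ} )^{λ} ‖_{L^p(Ω)} ≤ C ‖∇w‖_{L^p(Ω)} holds for all nonnegative functions w ∈ W^{1,p}(Ω). In fact, for each small α > 0, the function w(x) := (2 + f(x_1))^{λ}, where f(x_1) = |x_1|^{α} for x_1 < 0 and f(x_1) = −|x_1|^{α} for x_1 ≥ 0, satisfies ‖∇w‖_{L^p(Ω)}^p ≤ C α^p → 0 while ‖ w − ((1/|Ω|)∫_Ω w^{1/λ})^{λ} ‖_{L^p(Ω)}^p ≥ 1/C for a constant C depending only on λ and p. -/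
open MeasureTheory Real Set

noncomputable section

/-- The cube `[-1,1]^n`. -/
def cube (n : ℕ) : Set (EuclideanSpace ℝ (Fin n)) :=
  {x | ∀ i, x i ∈ Set.Icc (-1 : ℝ) 1}

/-- The function `w(x) = (2 + f(x_1))^λ` where `f(t) = |t|^α` for `t < 0` and
`f(t) = -|t|^α` for `t ≥ 0`; here the first coordinate is `x i`. -/
def wfun (n : ℕ) (lam α : ℝ) (i : Fin n) (x : EuclideanSpace ℝ (Fin n)) : ℝ :=
  (2 + (if x i < 0 then |x i| ^ α else -(|x i| ^ α))) ^ lam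

namespace NP

/-- The 1-D profile. -/
def ft (α t : ℝ) : ℝ := if t < 0 then |t| ^ α else -(|t| ^ α)

lemma wfun_eq (n : ℕ) (lam α : ℝ) (i : Fin n) (x : EuclideanSpace ℝ (Fin n)) :
    wfun n lam α i x = (2 + ft α (x i)) ^ lam := rfl

lemma abs_ft (α t : ℝ) : |ft α t| = |t| ^ α := by
  unfold ft
  split_ifs with h
  · exact abs_of_nonneg (Real.rpow_nonneg (abs_nonneg t) α)
  · rw [abs_neg]
    exact abs_of_nonneg (Real.rpow_nonneg (abs_nonneg t) α)

lemma ft_neg {α : ℝ} (hα : α ≠ 0) (t : ℝ) : ft α (-t) = - ft α t := by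
  unfold ft
  rcases lt_trichotomy t 0 with h | h | h
  · rw [if_neg (by simp; linarith), if_pos h, abs_neg]
  · subst h
    simp [Real.zero_rpow hα]
  · rw [if_pos (by linarith), if_neg (by simp; linarith), abs_neg, neg_neg]

lemma cont_abs_rpow {q : ℝ} (hq : 0 ≤ q) : Continuous fun t : ℝ => |t| ^ q :=
  continuous_iff_continuousAt.2 fun t =>
    (Real.continuousAt_rpow_const _ _ (Or.inr hq)).comp continuous_abs.continuousAt

lemma cont_rpow_const {q : ℝ} (hq : 0 ≤ q) : Continuous fun t : ℝ => t ^ q :=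
  continuous_iff_continuousAt.2 fun t => Real.continuousAt_rpow_const _ _ (Or.inr hq)

lemma ft_cont {α : ℝ} (hα : 0 < α) : Continuous (ft α) := by
  rw [continuous_iff_continuousAt]
  intro x
  rcases lt_trichotomy x 0 with hx | hx | hx
  · refine ((cont_abs_rpow hα.le).continuousAt).congr ?_
    filter_upwards [Iio_mem_nhds hx] with t ht
    simp [ft, show t < 0 from ht]
  · subst hx
    have h0 : ft α 0 = 0 := by simp [ft, Real.zero_rpow hα.ne']
    unfold ContinuousAt
    rw [h0]
    refine squeeze_zero_norm (a := fun t => |t| ^ α) (fun t => ?_) ?_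
    · rw [Real.norm_eq_abs, abs_ft]
    · have h := (cont_abs_rpow hα.le).continuousAt (x := (0:ℝ))
      unfold ContinuousAt at h
      simpa [Real.zero_rpow hα.ne'] using h
  · refine (((cont_abs_rpow hα.le).neg).continuousAt).congr ?_
    filter_upwards [Ioi_mem_nhds hx] with t ht
    simp [ft, not_lt.2 (le_of_lt (show (0:ℝ) < t from ht))]

lemma ft_bounds {α t : ℝ} (hα : 0 < α) (ht : |t| ≤ 1) :
    1 ≤ 2 + ft α t ∧ 2 + ft α t ≤ 3 := by
  have h : |ft α t| ≤ 1 := by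
    rw [abs_ft]; exact Real.rpow_le_one (abs_nonneg t) ht hα.le
  rw [abs_le] at h
  constructor <;> linarith [h.1, h.2]

/-! ### 1-D integrals -/

lemma intervalIntegrable_abs_rpow_01 {r : ℝ} (hr : -1 < r) :
    IntervalIntegrable (fun t : ℝ => |t| ^ r) volume 0 1 := by
  have h := intervalIntegral.intervalIntegrable_rpow' (a := 0) (b := 1) hr
  rw [intervalIntegrable_iff] at h ⊢
  refine h.congr_fun ?_ measurableSet_uIoc
  intro t ht
  rw [uIoc_of_le (by norm_num : (0:ℝ) ≤ 1)] at ht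
  show t ^ r = |t| ^ r
  rw [abs_of_pos ht.1]

lemma intervalIntegrable_abs_rpow_neg10 {r : ℝ} (hr : -1 < r) :
    IntervalIntegrable (fun t : ℝ => |t| ^ r) volume (-1) 0 := by
  have h := (IntervalIntegrable.iff_comp_neg).1 (intervalIntegrable_abs_rpow_01 hr)
  simp only [abs_neg, neg_zero] at h
  exact h.symm

lemma intervalIntegrable_abs_rpow {r : ℝ} (hr : -1 < r) :
    IntervalIntegrable (fun t : ℝ => |t| ^ r) volume (-1) 1 :=
  (intervalIntegrable_abs_rpow_neg10 hr).trans (intervalIntegrable_abs_rpow_01 hr)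

lemma integrableOn_abs_rpow {r : ℝ} (hr : -1 < r) :
    IntegrableOn (fun t : ℝ => |t| ^ r) (Icc (-1:ℝ) 1) := by
  have h := intervalIntegrable_abs_rpow hr
  rw [intervalIntegrable_iff_integrableOn_Icc_of_le (by norm_num : (-1:ℝ) ≤ 1)] at h
  exact h

lemma integral_abs_rpow_01 {r : ℝ} (hr : -1 < r) :
    ∫ t in (0:ℝ)..1, |t| ^ r = 1 / (r + 1) := by
  have hco : ∫ t in (0:ℝ)..1, |t| ^ r = ∫ t in (0:ℝ)..1, t ^ r := by
    refine intervalIntegral.integral_congr ?_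
    intro t ht
    rw [uIcc_of_le (by norm_num : (0:ℝ) ≤ 1)] at ht
    show |t| ^ r = t ^ r
    rcases eq_or_lt_of_le ht.1 with h | h
    · rw [← h]; simp
    · rw [abs_of_pos h]
  rw [hco, integral_rpow (Or.inl hr), Real.one_rpow,
    Real.zero_rpow (by linarith : r + 1 ≠ 0)]
  ring

lemma integral_abs_rpow {r : ℝ} (hr : -1 < r) :
    ∫ t in Icc (-1:ℝ) 1, |t| ^ r = 2 / (r + 1) := by
  rw [MeasureTheory.integral_Icc_eq_integral_Ioc,
    ← intervalIntegral.integral_of_le (by norm_num : (-1:ℝ) ≤ 1)]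
  have hsplit := intervalIntegral.integral_add_adjacent_intervals
    (intervalIntegrable_abs_rpow_neg10 hr) (intervalIntegrable_abs_rpow_01 hr)
  have hneg : ∫ t in (-1:ℝ)..0, |t| ^ r = ∫ t in (0:ℝ)..1, |t| ^ r := by
    have h := intervalIntegral.integral_comp_neg (a := (-1:ℝ)) (b := 0)
      (fun t : ℝ => |t| ^ r)
    simp only [abs_neg, neg_zero, neg_neg] at h
    exact h
  rw [← hsplit, hneg, integral_abs_rpow_01 hr]
  ring

lemma integral_ft_zero {α : ℝ} (hα : 0 < α) :
    ∫ t in Icc (-1:ℝ) 1, ft α t = 0 := by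
  rw [MeasureTheory.integral_Icc_eq_integral_Ioc,
    ← intervalIntegral.integral_of_le (by norm_num : (-1:ℝ) ≤ 1)]
  have h := intervalIntegral.integral_comp_neg (a := (-1:ℝ)) (b := 1) (ft α)
  simp only [neg_neg] at h
  have h2 : ∫ x in (-1:ℝ)..1, ft α (-x) = - ∫ x in (-1:ℝ)..1, ft α x := by
    simp_rw [ft_neg hα.ne']
    exact intervalIntegral.integral_neg
  rw [h2] at h
  linarith


/-! ### Transfer between the cube in Euclidean space and 1-D integrals -/

section transfer

variable {n : ℕ}

lemma cube_preimage (n : ℕ) :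
    (⇑((MeasurableEquiv.toLp 2 (Fin n → ℝ)).symm).symm) ⁻¹' (cube n) =
      Set.pi Set.univ (fun _ : Fin n => Icc (-1:ℝ) 1) := by
  ext x
  constructor
  · intro hx
    intro j _
    exact hx j
  · intro hx j
    exact hx j (Set.mem_univ j)

lemma measurableSet_cube (n : ℕ) : MeasurableSet (cube n) := by
  have : cube n = (⇑((MeasurableEquiv.toLp 2 (Fin n → ℝ)).symm))
      ⁻¹' (Set.pi Set.univ (fun _ : Fin n => Icc (-1:ℝ) 1)) := by
    ext x
    constructor
    · intro hx j _
      exact hx j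
    · intro hx j
      exact hx j (Set.mem_univ j)
  rw [this]
  exact (MeasurableSet.univ_pi fun _ => measurableSet_Icc).preimage
    ((MeasurableEquiv.toLp 2 (Fin n → ℝ)).symm).measurable

lemma isCompact_cube (n : ℕ) : IsCompact (cube n) := by
  have : cube n = ⋂ i, (fun x : EuclideanSpace ℝ (Fin n) => x i) ⁻¹' (Icc (-1:ℝ) 1) := by
    ext x; simp [cube, Set.mem_iInter]
  have hclosed : IsClosed (cube n) := by
    rw [this]
    exact isClosed_iInter fun i =>
      IsClosed.preimage (EuclideanSpace.proj (𝕜 := ℝ) i).continuous isClosed_Icc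
  refine Metric.isCompact_of_isClosed_isBounded hclosed ?_
  rw [Metric.isBounded_iff_subset_closedBall 0]
  refine ⟨Real.sqrt n, fun x hx => ?_⟩
  simp only [Metric.mem_closedBall, dist_zero_right]
  rw [EuclideanSpace.norm_eq]
  have : ∑ i : Fin n, ‖x i‖ ^ 2 ≤ ∑ _i : Fin n, (1:ℝ) := by
    refine Finset.sum_le_sum fun i _ => ?_
    have h1 : |x i| ≤ 1 := abs_le.mpr ⟨(hx i).1, (hx i).2⟩
    calc ‖x i‖ ^ 2 = |x i| ^ 2 := rfl
      _ ≤ 1 := by nlinarith [abs_nonneg (x i)]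
  calc Real.sqrt (∑ i : Fin n, ‖x i‖ ^ 2) ≤ Real.sqrt (∑ _i : Fin n, (1:ℝ)) :=
        Real.sqrt_le_sqrt this
    _ = Real.sqrt n := by simp

/-- The product-of-indicators representation of a one-coordinate function on the cube. -/
lemma indicator_eq_prod (n : ℕ) (i : Fin n) (G : ℝ → ℝ) (x : Fin n → ℝ) :
    Set.indicator (Set.pi Set.univ fun _ : Fin n => Icc (-1:ℝ) 1)
      (fun y => G (y i)) x
      = ∏ j : Fin n, Set.indicator (Icc (-1:ℝ) 1)
          (fun t => if j = i then G t else 1) (x j) := by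
  by_cases hx : x ∈ Set.pi Set.univ fun _ : Fin n => Icc (-1:ℝ) 1
  · rw [Set.indicator_of_mem hx]
    have heach : ∀ j : Fin n, Set.indicator (Icc (-1:ℝ) 1)
        (fun t => if j = i then G t else 1) (x j) = if j = i then G (x j) else 1 :=
      fun j => Set.indicator_of_mem (hx j (Set.mem_univ j)) _
    rw [Finset.prod_congr rfl (fun j _ => heach j)]
    rw [Finset.prod_ite_eq' Finset.univ i (fun j => G (x j)), if_pos (Finset.mem_univ i)]
  · rw [Set.indicator_of_notMem hx]
    obtain ⟨j, hj⟩ : ∃ j, x j ∉ Icc (-1:ℝ) 1 := by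
      by_contra hcon
      push_neg at hcon
      exact hx fun j _ => hcon j
    exact (Finset.prod_eq_zero (Finset.mem_univ j)
      (Set.indicator_of_notMem hj _)).symm

lemma integral_indicator_factor (i j : Fin n) (G : ℝ → ℝ) :
    ∫ t : ℝ, Set.indicator (Icc (-1:ℝ) 1) (fun t => if j = i then G t else 1) t
      = if j = i then ∫ t in Icc (-1:ℝ) 1, G t else 2 := by
  rw [MeasureTheory.integral_indicator measurableSet_Icc]
  by_cases hj : j = i
  · subst hj; simp
  · simp only [hj, if_false]
    rw [MeasureTheory.setIntegral_const]
    simp [Real.volume_Icc]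
    norm_num

lemma integral_cube_coord (n : ℕ) (i : Fin n) (G : ℝ → ℝ) :
    ∫ x in cube n, G (x i) = (∫ t in Icc (-1:ℝ) 1, G t) * 2 ^ (n - 1) := by
  have hmp := (EuclideanSpace.volume_preserving_symm_measurableEquiv_toLp (Fin n)).symm
  have hemb := ((MeasurableEquiv.toLp 2 (Fin n → ℝ)).symm).symm.measurableEmbedding
  rw [← hmp.setIntegral_preimage_emb hemb (fun y => G (y i)) (cube n)]
  have hfun : (fun x : Fin n → ℝ =>
      G ((((MeasurableEquiv.toLp 2 (Fin n → ℝ)).symm).symm x) i)) = fun x => G (x i) := rfl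
  rw [show (∫ x in (⇑((MeasurableEquiv.toLp 2 (Fin n → ℝ)).symm).symm) ⁻¹' cube n,
        G ((((MeasurableEquiv.toLp 2 (Fin n → ℝ)).symm).symm x) i))
      = ∫ x in Set.pi Set.univ (fun _ : Fin n => Icc (-1:ℝ) 1), G (x i) by
    rw [cube_preimage n]
    rfl]
  rw [← MeasureTheory.integral_indicator (MeasurableSet.univ_pi fun _ => measurableSet_Icc)]
  simp_rw [indicator_eq_prod n i G]
  rw [MeasureTheory.integral_fintype_prod_volume_eq_prod
    (fun j => Set.indicator (Icc (-1:ℝ) 1) (fun t => if j = i then G t else 1))]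
  simp_rw [integral_indicator_factor]
  rw [← Finset.mul_prod_erase Finset.univ _ (Finset.mem_univ i), if_pos rfl]
  congr 1
  rw [Finset.prod_congr rfl (fun j hj => if_neg (Finset.ne_of_mem_erase hj)),
    Finset.prod_const, Finset.card_erase_of_mem (Finset.mem_univ i),
    Finset.card_univ, Fintype.card_fin]

lemma integrableOn_cube_coord (n : ℕ) (i : Fin n) (G : ℝ → ℝ)
    (hG : IntegrableOn G (Icc (-1:ℝ) 1)) :
    IntegrableOn (fun x : EuclideanSpace ℝ (Fin n) => G (x i)) (cube n) := by
  have hmp := (EuclideanSpace.volume_preserving_symm_measurableEquiv_toLp (Fin n)).symm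
  have hemb := ((MeasurableEquiv.toLp 2 (Fin n → ℝ)).symm).symm.measurableEmbedding
  rw [← hmp.map_eq, hemb.integrableOn_map_iff]
  rw [show ((fun x : EuclideanSpace ℝ (Fin n) => G (x i)) ∘
        ⇑((MeasurableEquiv.toLp 2 (Fin n → ℝ)).symm).symm) = fun x : Fin n → ℝ => G (x i)
      from rfl, cube_preimage n]
  refine (MeasureTheory.integrable_indicator_iff
    (MeasurableSet.univ_pi fun _ => measurableSet_Icc)).mp ?_
  have heq : (Set.indicator (Set.pi Set.univ fun _ : Fin n => Icc (-1:ℝ) 1)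
      (fun y : Fin n → ℝ => G (y i)))
      = fun x : Fin n → ℝ => ∏ j : Fin n, Set.indicator (Icc (-1:ℝ) 1)
          (fun t => if j = i then G t else 1) (x j) := by
    funext x; exact indicator_eq_prod n i G x
  rw [heq]
  refine MeasureTheory.Integrable.fintype_prod fun j => ?_
  rw [MeasureTheory.integrable_indicator_iff measurableSet_Icc]
  by_cases hj : j = i
  · simp only [hj, if_pos rfl]
    exact hG
  · simp only [hj, if_false]
    exact integrableOn_const (by simp [Real.volume_Icc])

lemma volume_cube (n : ℕ) : volume (cube n) = 2 ^ n := by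
  have hmp := (EuclideanSpace.volume_preserving_symm_measurableEquiv_toLp (Fin n)).symm
  rw [← hmp.measure_preimage (measurableSet_cube n).nullMeasurableSet, cube_preimage n]
  rw [volume_pi_pi]
  simp only [Real.volume_Icc, Finset.prod_const, Finset.card_univ, Fintype.card_fin]
  norm_num

end transfer


/-! ### Derivative estimates -/

section deriv

variable {lam α p : ℝ}

lemma base_rpow_bound {b : ℝ} (hlam : 0 < lam) (h1 : 1 ≤ b) (h3 : b ≤ 3) :
    b ^ (lam - 1) ≤ 3 ^ lam + 1 := by
  rcases le_or_gt lam 1 with h | h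
  · have hle : b ^ (lam - 1) ≤ 1 :=
      Real.rpow_le_one_of_one_le_of_nonpos h1 (by linarith)
    have h3l : (0:ℝ) ≤ 3 ^ lam := Real.rpow_nonneg (by norm_num) _
    linarith
  · have h1' : b ^ (lam - 1) ≤ 3 ^ (lam - 1) :=
      Real.rpow_le_rpow (by linarith) h3 (by linarith)
    have h2' : (3:ℝ) ^ (lam - 1) ≤ 3 ^ lam :=
      Real.rpow_le_rpow_of_exponent_le (by norm_num) (by linarith)
    have h3l : (0:ℝ) < 1 := one_pos
    linarith

lemma hasDerivAt_g (hlam : 0 < lam) (hα : 0 < α) {t : ℝ} (ht : t ≠ 0) (ht1 : |t| ≤ 1) :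
    ∃ d : ℝ, HasDerivAt (fun s => (2 + ft α s) ^ lam) d t ∧
      |d| ≤ lam * (3 ^ lam + 1) * α * |t| ^ (α - 1) := by
  have habs1 : |t| ^ α ≤ 1 := Real.rpow_le_one (abs_nonneg t) ht1 hα.le
  have habs0 : (0:ℝ) ≤ |t| ^ α := Real.rpow_nonneg (abs_nonneg t) α
  obtain ⟨d, hder, hdabs⟩ : ∃ d, HasDerivAt (fun s => (2 + ft α s) ^ lam) d t ∧
      |d| = lam * α * |t| ^ (α - 1) * (2 + ft α t) ^ (lam - 1) := by
    rcases lt_or_gt_of_ne ht with hneg | hpos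
    · -- t < 0 : near t the function is s ↦ (2 + (-s) ^ α) ^ lam
      have htne : -t ≠ 0 := by simpa using ht
      have h1 : HasDerivAt (fun s : ℝ => -s) (-1) t := (hasDerivAt_id t).neg
      have h2 : HasDerivAt (fun s : ℝ => (-s) ^ α) (-1 * α * (-t) ^ (α - 1)) t :=
        h1.rpow_const (Or.inl htne)
      have h3 : HasDerivAt (fun s : ℝ => 2 + (-s) ^ α) (-1 * α * (-t) ^ (α - 1)) t :=
        h2.const_add 2
      have hbpos : (0:ℝ) < 2 + (-t) ^ α := by
        have : (0:ℝ) ≤ (-t) ^ α := Real.rpow_nonneg (by linarith) α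
        linarith
      have h4 : HasDerivAt (fun s : ℝ => (2 + (-s) ^ α) ^ lam)
          ((-1 * α * (-t) ^ (α - 1)) * lam * (2 + (-t) ^ α) ^ (lam - 1)) t :=
        h3.rpow_const (Or.inl hbpos.ne')
      have hev : (fun s => (2 + ft α s) ^ lam) =ᶠ[nhds t]
          (fun s : ℝ => (2 + (-s) ^ α) ^ lam) := by
        filter_upwards [Iio_mem_nhds hneg] with s hs
        have hs' : s < 0 := hs
        rw [show ft α s = (-s) ^ α by unfold ft; rw [if_pos hs', abs_of_neg hs']]
      refine ⟨_, h4.congr_of_eventuallyEq hev, ?_⟩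
      have htabs : -t = |t| := (abs_of_neg hneg).symm
      have hft : ft α t = |t| ^ α := by unfold ft; rw [if_pos hneg]
      rw [htabs, hft]
      have hP : (0:ℝ) ≤ α * |t| ^ (α - 1) * (2 + |t| ^ α) ^ (lam - 1) := by positivity
      rw [show -1 * α * |t| ^ (α - 1) * lam * (2 + |t| ^ α) ^ (lam - 1)
          = -(lam * α * |t| ^ (α - 1) * (2 + |t| ^ α) ^ (lam - 1)) by ring,
        abs_neg, abs_of_nonneg (by positivity)]
    · -- t > 0 : near t the function is s ↦ (2 - s ^ α) ^ lam
      have h1 : HasDerivAt (fun s : ℝ => s ^ α) (α * t ^ (α - 1)) t :=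
        Real.hasDerivAt_rpow_const (Or.inl ht)
      have h2 : HasDerivAt (fun s : ℝ => 2 - s ^ α) (-(α * t ^ (α - 1))) t :=
        h1.const_sub 2
      have htα : t ^ α ≤ 1 := by
        rw [← abs_of_pos hpos]; exact habs1
      have hbpos : (0:ℝ) < 2 - t ^ α := by linarith
      have h4 : HasDerivAt (fun s : ℝ => (2 - s ^ α) ^ lam)
          ((-(α * t ^ (α - 1))) * lam * (2 - t ^ α) ^ (lam - 1)) t :=
        h2.rpow_const (Or.inl hbpos.ne')
      have hev : (fun s => (2 + ft α s) ^ lam) =ᶠ[nhds t]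
          (fun s : ℝ => (2 - s ^ α) ^ lam) := by
        filter_upwards [Ioi_mem_nhds hpos] with s hs
        have hs' : (0:ℝ) < s := hs
        rw [show (2:ℝ) + ft α s = 2 - s ^ α by
          unfold ft; rw [if_neg (not_lt.2 hs'.le), abs_of_pos hs']; ring]
      refine ⟨_, h4.congr_of_eventuallyEq hev, ?_⟩
      have htabs : t = |t| := (abs_of_pos hpos).symm
      have hft : 2 + ft α t = 2 - t ^ α := by
        unfold ft; rw [if_neg (not_lt.2 hpos.le), abs_of_pos hpos]; ring
      rw [hft]
      rw [show -(α * t ^ (α - 1)) * lam * (2 - t ^ α) ^ (lam - 1)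
          = -(lam * α * t ^ (α - 1) * (2 - t ^ α) ^ (lam - 1)) by ring, abs_neg]
      rw [abs_of_nonneg (by positivity)]
      rw [← htabs]
  refine ⟨d, hder, ?_⟩
  rw [hdabs]
  have hbd := base_rpow_bound (b := 2 + ft α t) hlam (ft_bounds hα ht1).1 (ft_bounds hα ht1).2
  have hX : (0:ℝ) ≤ lam * α * |t| ^ (α - 1) := by positivity
  calc lam * α * |t| ^ (α - 1) * (2 + ft α t) ^ (lam - 1)
      ≤ lam * α * |t| ^ (α - 1) * (3 ^ lam + 1) := mul_le_mul_of_nonneg_left hbd hX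
    _ = lam * (3 ^ lam + 1) * α * |t| ^ (α - 1) := by ring

lemma abs_coord_le_norm {n : ℕ} (x : EuclideanSpace ℝ (Fin n)) (i : Fin n) :
    |x i| ≤ ‖x‖ := by
  rw [EuclideanSpace.norm_eq]
  have h1 : |x i| = Real.sqrt (‖x i‖ ^ 2) := by
    rw [Real.sqrt_sq_eq_abs, abs_norm]; rfl
  rw [h1]
  exact Real.sqrt_le_sqrt
    (Finset.single_le_sum (fun j _ => sq_nonneg ‖x j‖) (Finset.mem_univ i))

lemma norm_fderiv_wfun_le {n : ℕ} (i : Fin n) (hlam : 0 < lam) (hα : 0 < α)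
    {x : EuclideanSpace ℝ (Fin n)} (hx0 : x i ≠ 0) (hx1 : |x i| ≤ 1) :
    ‖fderiv ℝ (wfun n lam α i) x‖ ≤ lam * (3 ^ lam + 1) * α * |x i| ^ (α - 1) := by
  obtain ⟨d, hder, hdle⟩ := hasDerivAt_g hlam hα hx0 hx1
  have hproj : HasFDerivAt (fun y : EuclideanSpace ℝ (Fin n) => y i)
      (EuclideanSpace.proj (𝕜 := ℝ) i) x :=
    (EuclideanSpace.proj (𝕜 := ℝ) i).hasFDerivAt
  have hw : HasFDerivAt (wfun n lam α i)
      (d • (EuclideanSpace.proj (𝕜 := ℝ) i)) x :=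
    by have := hder.comp_hasFDerivAt x hproj; exact this
  rw [hw.fderiv, norm_smul]
  have hpn : ‖(EuclideanSpace.proj (𝕜 := ℝ) i :
      EuclideanSpace ℝ (Fin n) →L[ℝ] ℝ)‖ ≤ 1 :=
    ContinuousLinearMap.opNorm_le_bound _ zero_le_one fun y => by
      rw [one_mul]; exact abs_coord_le_norm y i
  calc ‖d‖ * ‖(EuclideanSpace.proj (𝕜 := ℝ) i :
        EuclideanSpace ℝ (Fin n) →L[ℝ] ℝ)‖
      ≤ ‖d‖ * 1 := mul_le_mul_of_nonneg_left hpn (norm_nonneg d)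
    _ = |d| := by rw [mul_one, Real.norm_eq_abs]
    _ ≤ _ := hdle

end deriv


/-! ### Main integral estimates -/

section estimates

variable {lam α p : ℝ}

lemma hyperplane_zero (n : ℕ) (i : Fin n) :
    volume {x : EuclideanSpace ℝ (Fin n) | x i = 0} = 0 := by
  have hsub : {x : EuclideanSpace ℝ (Fin n) | x i = 0}
      = (LinearMap.ker (EuclideanSpace.projₗ (𝕜 := ℝ) i) :
          Set (EuclideanSpace ℝ (Fin n))) := by
    ext x
    simp only [Set.mem_setOf_eq, SetLike.mem_coe, LinearMap.mem_ker]
    rfl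
  rw [hsub]
  refine MeasureTheory.Measure.addHaar_submodule volume _ (fun hker => ?_)
  have h1 : EuclideanSpace.single i (1:ℝ) ∈
      LinearMap.ker (EuclideanSpace.projₗ (𝕜 := ℝ) i) := by
    rw [hker]; trivial
  rw [LinearMap.mem_ker] at h1
  have h2 : (EuclideanSpace.projₗ (𝕜 := ℝ) i) (EuclideanSpace.single i (1:ℝ)) = 1 := by
    show EuclideanSpace.single i (1:ℝ) i = 1
    rw [EuclideanSpace.single_apply, if_pos rfl]
  rw [h1] at h2
  exact one_ne_zero h2.symm

lemma grad_integral_le (n : ℕ) (i : Fin n) (hlam : 0 < lam) (hp0 : 0 < p) (hp1 : p < 1)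
    (hα : 0 < α) (hα1 : α < 1) :
    ∫ x in cube n, ‖fderiv ℝ (wfun n lam α i) x‖ ^ p ≤
      ((lam * (3 ^ lam + 1)) ^ p * (2 / (1 - p) * 2 ^ (n - 1))) * α ^ p := by
  set K := lam * (3 ^ lam + 1) with hK
  have hKpos : 0 < K := by positivity
  have hintg : IntegrableOn (fun x : EuclideanSpace ℝ (Fin n) =>
      K ^ p * α ^ p * |x i| ^ (-p)) (cube n) :=
    (integrableOn_cube_coord n i (fun t => |t| ^ (-p))
      (integrableOn_abs_rpow (by linarith))).const_mul (K ^ p * α ^ p)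
  have h2 : ∀ᵐ x : EuclideanSpace ℝ (Fin n) ∂volume, x i ≠ 0 := by
    rw [ae_iff]
    simpa using hyperplane_zero n i
  have hae : ∀ᵐ x ∂(volume.restrict (cube n)),
      ‖fderiv ℝ (wfun n lam α i) x‖ ^ p ≤ K ^ p * α ^ p * |x i| ^ (-p) := by
    filter_upwards [ae_restrict_mem (measurableSet_cube n), ae_restrict_of_ae h2]
      with x hx hx0
    have hx1 : |x i| ≤ 1 := abs_le.mpr ⟨(hx i).1, (hx i).2⟩
    have hb := norm_fderiv_wfun_le i hlam hα hx0 hx1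
    calc ‖fderiv ℝ (wfun n lam α i) x‖ ^ p
        ≤ (K * α * |x i| ^ (α - 1)) ^ p := by
          refine Real.rpow_le_rpow (norm_nonneg _) ?_ hp0.le
          calc ‖fderiv ℝ (wfun n lam α i) x‖ ≤ lam * (3 ^ lam + 1) * α * |x i| ^ (α - 1) := hb
            _ = K * α * |x i| ^ (α - 1) := by rw [hK]
      _ = K ^ p * α ^ p * (|x i| ^ (α - 1)) ^ p := by
          rw [Real.mul_rpow (by positivity) (Real.rpow_nonneg (abs_nonneg _) _),
            Real.mul_rpow hKpos.le hα.le]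
      _ = K ^ p * α ^ p * |x i| ^ ((α - 1) * p) := by
          rw [← Real.rpow_mul (abs_nonneg _)]
      _ ≤ K ^ p * α ^ p * |x i| ^ (-p) := by
          refine mul_le_mul_of_nonneg_left ?_ (by positivity)
          exact Real.rpow_le_rpow_of_exponent_ge (abs_pos.2 hx0) hx1 (by nlinarith)
  calc ∫ x in cube n, ‖fderiv ℝ (wfun n lam α i) x‖ ^ p
      ≤ ∫ x in cube n, K ^ p * α ^ p * |x i| ^ (-p) :=
        integral_mono_of_nonneg
          (Filter.Eventually.of_forall fun x => Real.rpow_nonneg (norm_nonneg _) p)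
          hintg hae
    _ = K ^ p * α ^ p * ∫ x in cube n, |x i| ^ (-p) :=
        MeasureTheory.integral_const_mul _ _
    _ = K ^ p * α ^ p * (2 / (-p + 1) * 2 ^ (n - 1)) := by
        rw [integral_cube_coord n i (fun t => |t| ^ (-p)), integral_abs_rpow (by linarith)]
    _ = (K ^ p * (2 / (1 - p) * 2 ^ (n - 1))) * α ^ p := by
        rw [show -p + 1 = 1 - p by ring]; ring

lemma cont_wprofile (hlam : 0 < lam) (hα : 0 < α) :
    Continuous fun t : ℝ => (2 + ft α t) ^ lam :=
  (cont_rpow_const hlam.le).comp (continuous_const.add (ft_cont hα))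

lemma average_eq_two (n : ℕ) (hn : 1 ≤ n) (i : Fin n) (hlam : 0 < lam)
    (hα : 0 < α) (hα1 : α < 1) :
    (⨍ y in cube n, wfun n lam α i y ^ (1 / lam)) = 2 := by
  have hcongr : ∫ y in cube n, wfun n lam α i y ^ (1 / lam)
      = ∫ y in cube n, (2 + ft α (y i)) := by
    refine MeasureTheory.setIntegral_congr_fun (measurableSet_cube n) (fun y hy => ?_)
    have hy1 : |y i| ≤ 1 := abs_le.mpr ⟨(hy i).1, (hy i).2⟩
    have hpos : (0:ℝ) ≤ 2 + ft α (y i) := by linarith [(ft_bounds hα hy1).1]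
    show ((2 + ft α (y i)) ^ lam) ^ (1 / lam) = 2 + ft α (y i)
    rw [← Real.rpow_mul hpos, mul_one_div_cancel hlam.ne', Real.rpow_one]
  have hint : ∫ y in cube n, (2 + ft α (y i))
      = (∫ t in Icc (-1:ℝ) 1, (2 + ft α t)) * 2 ^ (n - 1) :=
    integral_cube_coord n i (fun t => 2 + ft α t)
  have h1d : ∫ t in Icc (-1:ℝ) 1, (2 + ft α t) = 4 := by
    rw [MeasureTheory.integral_add (integrableOn_const (C := (2:ℝ)) (s := Icc (-1:ℝ) 1) (μ := volume) (by simp [Real.volume_Icc]))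
      ((ft_cont hα).integrableOn_Icc)]
    rw [integral_ft_zero hα, MeasureTheory.setIntegral_const]
    simp [Real.volume_Icc]
    norm_num
  obtain ⟨m, rfl⟩ : ∃ m, n = m + 1 := ⟨n - 1, by omega⟩
  rw [MeasureTheory.setAverage_eq, measureReal_def, volume_cube, hcongr, hint, h1d]
  simp only [smul_eq_mul]
  rw [show (m + 1) - 1 = m from rfl]
  rw [ENNReal.toReal_pow, ENNReal.toReal_ofNat]
  rw [pow_succ]
  have h2m : (0:ℝ) < 2 ^ m := by positivity
  field_simp
  ring

lemma lower_bound (n : ℕ) (hn : 1 ≤ n) (i : Fin n) (hlam : 0 < lam) (hp0 : 0 < p)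
    (hα : 0 < α) (hα1 : α < 1) :
    ((5/2 : ℝ) ^ lam - 2 ^ lam) ^ p * (1/2) ≤
      ∫ x in cube n, |wfun n lam α i x - (2:ℝ) ^ lam| ^ p := by
  set c : ℝ := (5/2 : ℝ) ^ lam - 2 ^ lam with hc
  have hcpos : 0 < c := by
    have := Real.rpow_lt_rpow (by norm_num : (0:ℝ) ≤ 2) (by norm_num : (2:ℝ) < 5/2) hlam
    simpa [hc] using sub_pos.2 this
  set H : ℝ → ℝ := fun t => |(2 + ft α t) ^ lam - 2 ^ lam| ^ p with hH
  have hHcont : Continuous H :=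
    (cont_abs_rpow hp0.le).comp ((cont_wprofile hlam hα).sub continuous_const)
  have hHnonneg : ∀ t, 0 ≤ H t := fun t => Real.rpow_nonneg (abs_nonneg _) p
  have hHint : IntegrableOn H (Icc (-1:ℝ) 1) := hHcont.integrableOn_Icc
  have hmain : ∫ x in cube n, |wfun n lam α i x - (2:ℝ) ^ lam| ^ p
      = (∫ t in Icc (-1:ℝ) 1, H t) * 2 ^ (n - 1) := integral_cube_coord n i H
  rw [hmain]
  have hsub : ∫ t in Icc (-1:ℝ) (-1/2), H t ≤ ∫ t in Icc (-1:ℝ) 1, H t := by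
    refine MeasureTheory.setIntegral_mono_set hHint
      (Filter.Eventually.of_forall fun t => hHnonneg t) ?_
    exact HasSubset.Subset.eventuallyLE (Icc_subset_Icc le_rfl (by norm_num))
  have hptwise : ∀ t ∈ Icc (-1:ℝ) (-1/2), c ^ p ≤ H t := by
    intro t ht
    have htneg : t < 0 := lt_of_le_of_lt ht.2 (by norm_num)
    have habs : |t| = -t := abs_of_neg htneg
    have hta : 1/2 ≤ |t| := by rw [habs]; linarith [ht.2]
    have htb : |t| ≤ 1 := by rw [habs]; linarith [ht.1]
    have hft : ft α t = |t| ^ α := by unfold ft; rw [if_pos htneg]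
    have h5 : (5/2 : ℝ) ≤ 2 + ft α t := by
      rw [hft]
      have h1 : |t| ≤ |t| ^ α := by
        have h := Real.rpow_le_rpow_of_exponent_ge
          (show (0:ℝ) < |t| by linarith) htb hα1.le
        rwa [Real.rpow_one] at h
      linarith
    have hval : c ≤ (2 + ft α t) ^ lam - 2 ^ lam := by
      have := Real.rpow_le_rpow (by norm_num : (0:ℝ) ≤ 5/2) h5 hlam.le
      simp only [hc]
      linarith
    have hvpos : 0 ≤ (2 + ft α t) ^ lam - 2 ^ lam := le_trans hcpos.le hval
    calc c ^ p ≤ ((2 + ft α t) ^ lam - 2 ^ lam) ^ p :=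
          Real.rpow_le_rpow hcpos.le hval hp0.le
      _ = H t := by rw [hH]; simp only; rw [abs_of_nonneg hvpos]
  have hconst : c ^ p * (1/2) ≤ ∫ t in Icc (-1:ℝ) (-1/2), H t := by
    have := MeasureTheory.setIntegral_ge_of_const_le (c := c ^ p) measurableSet_Icc
      (by simp [Real.volume_Icc]) hptwise
      (hHint.mono_set (Icc_subset_Icc le_rfl (by norm_num)))
    have hvol : (volume (Icc (-1:ℝ) (-1/2))).toReal = 1/2 := by
      simp [Real.volume_Icc]
      norm_num
    rw [measureReal_def, hvol, smul_eq_mul, mul_comm] at this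
    exact this
  have h2n : (1:ℝ) ≤ 2 ^ (n - 1) := one_le_pow₀ (by norm_num)
  have hI : 0 ≤ ∫ t in Icc (-1:ℝ) 1, H t :=
    MeasureTheory.setIntegral_nonneg measurableSet_Icc fun t _ => hHnonneg t
  calc c ^ p * (1/2) ≤ ∫ t in Icc (-1:ℝ) 1, H t := le_trans hconst hsub
    _ = (∫ t in Icc (-1:ℝ) 1, H t) * 1 := by ring
    _ ≤ (∫ t in Icc (-1:ℝ) 1, H t) * 2 ^ (n - 1) :=
        mul_le_mul_of_nonneg_left h2n hI

end estimates

end NP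

open NP in
/-- Failure of the nonlinear Poincaré inequality for `0 < p < 1` on
`Ω = S = [-1,1]^n`, witnessed by the explicit family `wfun`. -/
theorem nonlinear_poincare_fails_p_lt_one
    (n : ℕ) (hn : 1 ≤ n) (lam p : ℝ)
    (hlam : 0 < lam) (hp0 : 0 < p) (hp1 : p < 1) :
    (¬ ∃ C : ℝ, ∀ w : EuclideanSpace ℝ (Fin n) → ℝ,
      Continuous w → (∀ x ∈ cube n, 0 ≤ w x) →
      (∫ x in cube n, |w x - (⨍ y in cube n, w y ^ (1 / lam)) ^ lam| ^ p) ^ (1 / p) ≤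
        C * (∫ x in cube n, ‖fderiv ℝ w x‖ ^ p) ^ (1 / p)) ∧
    ∃ C : ℝ, 0 < C ∧ ∀ α : ℝ, 0 < α → α < 1 →
      (∫ x in cube n, ‖fderiv ℝ (wfun n lam α ⟨0, by omega⟩) x‖ ^ p) ≤ C * α ^ p ∧
      1 / C ≤ ∫ x in cube n,
        |wfun n lam α ⟨0, by omega⟩ x -
          (⨍ y in cube n, wfun n lam α ⟨0, by omega⟩ y ^ (1 / lam)) ^ lam| ^ p := by
  have key : ∀ i : Fin n, ∃ C : ℝ, 0 < C ∧ ∀ α : ℝ, 0 < α → α < 1 →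
      (∫ x in cube n, ‖fderiv ℝ (wfun n lam α i) x‖ ^ p) ≤ C * α ^ p ∧
      1 / C ≤ ∫ x in cube n,
        |wfun n lam α i x -
          (⨍ y in cube n, wfun n lam α i y ^ (1 / lam)) ^ lam| ^ p := by
    intro i
    set C₁ : ℝ := (lam * (3 ^ lam + 1)) ^ p * (2 / (1 - p) * 2 ^ (n - 1)) with hC₁
    set L : ℝ := ((5/2 : ℝ) ^ lam - 2 ^ lam) ^ p * (1/2) with hL
    have hC₁pos : 0 < C₁ := by
      have h1 : (0:ℝ) < (lam * (3 ^ lam + 1)) ^ p :=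
        Real.rpow_pos_of_pos (by positivity) p
      have h2 : (0:ℝ) < 2 / (1 - p) := by
        apply div_pos (by norm_num); linarith
      positivity
    have hcpos : (0:ℝ) < (5/2 : ℝ) ^ lam - 2 ^ lam := by
      have := Real.rpow_lt_rpow (by norm_num : (0:ℝ) ≤ 2)
        (by norm_num : (2:ℝ) < 5/2) hlam
      linarith
    have hLpos : 0 < L := by
      have := Real.rpow_pos_of_pos hcpos p
      rw [hL]; positivity
    refine ⟨C₁ + 1/L, by positivity, fun α hα hα1 => ⟨?_, ?_⟩⟩
    · have hg := grad_integral_le n i hlam hp0 hp1 hα hα1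
      have hαp : (0:ℝ) < α ^ p := Real.rpow_pos_of_pos hα p
      have h1L : (0:ℝ) < 1/L := by positivity
      calc ∫ x in cube n, ‖fderiv ℝ (wfun n lam α i) x‖ ^ p ≤ C₁ * α ^ p := hg
        _ ≤ (C₁ + 1/L) * α ^ p := by nlinarith
    · rw [average_eq_two n hn i hlam hα hα1]
      have hlow := lower_bound n hn i hlam hp0 hα hα1
      have h1 : 1 / (C₁ + 1/L) ≤ L := by
        rw [div_le_iff₀ (by positivity)]
        have hinv : L * (1/L) = 1 := by field_simp
        nlinarith
      exact le_trans (le_trans h1 hlow) (le_of_eq rfl)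
  constructor
  · rintro ⟨C₀, hC₀⟩
    have hn0 : 0 < n := hn
    set i : Fin n := ⟨0, hn0⟩ with hi
    obtain ⟨C, hCpos, hCk⟩ := key i
    have hwcont : ∀ α : ℝ, 0 < α → Continuous (wfun n lam α i) := fun α hα =>
      (cont_wprofile hlam hα).comp (EuclideanSpace.proj (𝕜 := ℝ) i).continuous
    have hwnn : ∀ α : ℝ, 0 < α → ∀ x ∈ cube n, 0 ≤ wfun n lam α i x := by
      intro α hα x hx
      have hx1 : |x i| ≤ 1 := abs_le.mpr ⟨(hx i).1, (hx i).2⟩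
      have := (ft_bounds hα hx1).1
      rw [wfun_eq]
      exact Real.rpow_nonneg (by linarith) lam
    set A : ℝ := (1/C) ^ (1/p) with hA
    have hApos : 0 < A := Real.rpow_pos_of_pos (by positivity) _
    have hmain : ∀ α : ℝ, 0 < α → α < 1 → A ≤ (C₀ * C ^ (1/p)) * α := by
      intro α hα hα1
      obtain ⟨hg, hl⟩ := hCk α hα hα1
      have hIg : 0 ≤ ∫ x in cube n, ‖fderiv ℝ (wfun n lam α i) x‖ ^ p :=
        MeasureTheory.integral_nonneg fun x => Real.rpow_nonneg (norm_nonneg _) p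
      have hineq := hC₀ (wfun n lam α i) (hwcont α hα) (hwnn α hα)
      have hA_le : A ≤ (∫ x in cube n,
          |wfun n lam α i x -
            (⨍ y in cube n, wfun n lam α i y ^ (1 / lam)) ^ lam| ^ p) ^ (1/p) := by
        rw [hA]
        exact Real.rpow_le_rpow (by positivity) hl (by positivity)
      have hr : (∫ x in cube n, ‖fderiv ℝ (wfun n lam α i) x‖ ^ p) ^ (1/p)
          ≤ (C * α ^ p) ^ (1/p) :=
        Real.rpow_le_rpow hIg hg (by positivity)
      have hCα : (C * α ^ p) ^ (1/p) = C ^ (1/p) * α := by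
        rw [Real.mul_rpow hCpos.le (Real.rpow_nonneg hα.le p),
          ← Real.rpow_mul hα.le, mul_one_div_cancel hp0.ne', Real.rpow_one]
      have hrnn : (0:ℝ) ≤ (∫ x in cube n, ‖fderiv ℝ (wfun n lam α i) x‖ ^ p) ^ (1/p) :=
        Real.rpow_nonneg hIg _
      rcases le_or_gt 0 C₀ with h0 | h0
      · calc A ≤ _ := hA_le
          _ ≤ C₀ * (∫ x in cube n, ‖fderiv ℝ (wfun n lam α i) x‖ ^ p) ^ (1/p) := hineq
          _ ≤ C₀ * (C * α ^ p) ^ (1/p) := mul_le_mul_of_nonneg_left hr h0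
          _ = (C₀ * C ^ (1/p)) * α := by rw [hCα]; ring
      · exfalso
        have h1 : C₀ * (∫ x in cube n, ‖fderiv ℝ (wfun n lam α i) x‖ ^ p) ^ (1/p) ≤ 0 :=
          mul_nonpos_of_nonpos_of_nonneg h0.le hrnn
        linarith [le_trans hA_le hineq]
    set B : ℝ := C₀ * C ^ (1/p) with hB
    rcases le_or_gt B 0 with hB0 | hB0
    · have h := hmain (1/2) (by norm_num) (by norm_num)
      nlinarith
    · set α₀ : ℝ := min (1/2) (A / (2*B)) with hα₀
      have hα₀pos : 0 < α₀ := lt_min (by norm_num) (by positivity)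
      have hα₀1 : α₀ < 1 := lt_of_le_of_lt (min_le_left _ _) (by norm_num)
      have h := hmain α₀ hα₀pos hα₀1
      have h2 : B * α₀ ≤ B * (A / (2*B)) :=
        mul_le_mul_of_nonneg_left (min_le_right _ _) hB0.le
      have h3 : B * (A / (2*B)) = A/2 := by field_simp
      linarith
  · exact key ⟨0, by omega⟩

end
end

section
/- For every α > −1/2 there exists a constant C, depending only on α, such that ‖ |x_1|^{α} u ‖_{L^2([0,1]^2)}^2 ≤ C ‖ |x_1|^{α} ∂_{x_1} u ‖_{L^1([0,1]^2)} · ‖ |x_1|^{α} ∂_{x_2} u ‖_{L^1([0,1]^2)} for all u ∈ C^1([0,1]^2) satisfying u(1, x_2) = 0 and u(x_1, 1) = 0 for all 0 ≤ x_1, x_2 ≤ 1. -/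
open MeasureTheory Real Set
open scoped ENNReal

noncomputable section

namespace WSIAux

lemma young_ineq {a b ε : ℝ} (hε : 0 < ε) :
    a * b ≤ ε / 2 * a ^ 2 + 1 / (2 * ε) * b ^ 2 := by
  have h : ε / 2 * a ^ 2 + 1 / (2 * ε) * b ^ 2 - a * b = (ε * a - b) ^ 2 / (2 * ε) := by
    field_simp
    ring
  have h2 : 0 ≤ (ε * a - b) ^ 2 / (2 * ε) := div_nonneg (sq_nonneg _) (by linarith)
  linarith

lemma weight_cmp {α x t : ℝ} (hx : 0 ≤ x) (hxt : x ≤ t) (ht2 : t ≤ 2 * x) :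
    |x| ^ α ≤ 2 ^ |α| * |t| ^ α := by
  have ht0 : 0 ≤ t := hx.trans hxt
  rw [abs_of_nonneg hx, abs_of_nonneg ht0]
  rcases le_or_gt 0 α with hα | hα
  · have h1 : x ^ α ≤ t ^ α := Real.rpow_le_rpow hx hxt hα
    have h2 : (1 : ℝ) ≤ 2 ^ |α| := by
      calc (1 : ℝ) = 2 ^ (0 : ℝ) := (Real.rpow_zero 2).symm
        _ ≤ 2 ^ |α| := Real.rpow_le_rpow_of_exponent_le one_le_two (abs_nonneg α)
    calc x ^ α ≤ t ^ α := h1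
      _ = 1 * t ^ α := (one_mul _).symm
      _ ≤ 2 ^ |α| * t ^ α := mul_le_mul_of_nonneg_right h2 (Real.rpow_nonneg ht0 α)
  · rcases eq_or_lt_of_le hx with hx0 | hx0
    · have hxx : x = 0 := hx0.symm
      have htt : t = 0 := le_antisymm (by simpa [hxx] using ht2) ht0
      rw [hxx, htt, Real.zero_rpow (ne_of_lt hα)]
      positivity
    · have ht0' : (0 : ℝ) < t := lt_of_lt_of_le hx0 hxt
      have key : x ^ α ≤ (t / 2) ^ α :=
        Real.rpow_le_rpow_of_nonpos (by positivity) (by linarith) hα.le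
      have h2 : (t / 2) ^ α = (2 : ℝ) ^ (-α) * t ^ α := by
        rw [Real.div_rpow ht0'.le (by norm_num : (0:ℝ) ≤ 2),
          Real.rpow_neg (by norm_num : (0:ℝ) ≤ 2)]
        ring
      rw [abs_of_neg hα]
      rw [h2] at key
      exact key

lemma measurable_weight (α : ℝ) : Measurable fun x : ℝ => |x| ^ α := by
  have heq : (fun x : ℝ => |x| ^ α)
      = fun x => if x = 0 then (if α = 0 then 1 else 0) else Real.exp (Real.log |x| * α) := by
    funext x
    rcases eq_or_ne x 0 with h | h
    · rcases eq_or_ne α 0 with h2 | h2 <;> simp [h, h2, Real.zero_rpow]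
    · rw [if_neg h, Real.rpow_def_of_pos (abs_pos.mpr h)]
  rw [heq]
  refine Measurable.ite ?_ measurable_const ?_
  · simp [Set.setOf_eq_eq_singleton]
  · exact Real.measurable_exp.comp ((Real.measurable_log.comp measurable_abs).mul_const α)

lemma lintegral_double (F : ℝ → ℝ≥0∞) (hF : Measurable F) :
    ∫⁻ x in Ioc (0:ℝ) (1/2 : ℝ), F (2 * x) = ENNReal.ofReal |(2:ℝ)⁻¹| * ∫⁻ z in Ioc (0:ℝ) 1, F z := by
  have hmeas : Measurable fun x : ℝ => (2:ℝ) * x := (measurable_id.const_mul 2)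
  have h1 : ∫⁻ x in Ioc (0:ℝ) (1/2 : ℝ), F (2 * x)
      = ∫⁻ x, (Ioc (0:ℝ) 1).indicator F (2 * x) := by
    rw [← lintegral_indicator measurableSet_Ioc]
    congr 1
    funext x
    by_cases hx : x ∈ Ioc (0:ℝ) (1/2 : ℝ)
    · rw [Set.indicator_of_mem hx, Set.indicator_of_mem
        (show (2*x) ∈ Ioc (0:ℝ) 1 from ⟨by linarith [hx.1], by linarith [hx.2]⟩)]
    · rw [Set.indicator_of_notMem hx, Set.indicator_of_notMem]
      intro hmem
      exact hx ⟨by linarith [hmem.1], by linarith [hmem.2]⟩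
  rw [h1, ← lintegral_map (hF.indicator measurableSet_Ioc) hmeas,
    Real.map_volume_mul_left (by norm_num : (2:ℝ) ≠ 0), lintegral_smul_measure,
    lintegral_indicator measurableSet_Ioc, smul_eq_mul]

lemma ofReal_intervalIntegral_abs {f : ℝ → ℝ} (hf : Continuous f) {a b : ℝ} (hab : a ≤ b) :
    ENNReal.ofReal (∫ t in a..b, |f t|) = ∫⁻ t in Ioc a b, ENNReal.ofReal |f t| := by
  rw [intervalIntegral.integral_of_le hab]
  exact ofReal_integral_eq_lintegral_ofReal hf.abs.integrableOn_Ioc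
    (ae_of_all _ fun t => abs_nonneg _)

lemma ftc_row {u : ℝ × ℝ → ℝ} (hu : ContDiff ℝ 1 u) (y a b : ℝ) (hab : a ≤ b) :
    |u (a, y)| ≤ |u (b, y)| + ∫ t in a..b, |fderiv ℝ u (t, y) (1, 0)| := by
  have hcont : Continuous fun t : ℝ => fderiv ℝ u (t, y) ((1 : ℝ), (0 : ℝ)) := by
    have h1 : Continuous (fderiv ℝ u) := hu.continuous_fderiv one_ne_zero
    have h2 : Continuous fun t : ℝ => ((t, y) : ℝ × ℝ) := continuous_id.prodMk continuous_const
    exact (h1.comp h2).clm_apply continuous_const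
  have hderiv : ∀ t ∈ uIcc a b,
      HasDerivAt (fun t : ℝ => u (t, y)) (fderiv ℝ u (t, y) ((1:ℝ), (0:ℝ))) t := by
    intro t _
    have hd : HasFDerivAt u (fderiv ℝ u (t, y)) (t, y) :=
      (hu.differentiable one_ne_zero (t, y)).hasFDerivAt
    have hline : HasDerivAt (fun t : ℝ => ((t, y) : ℝ × ℝ)) ((1 : ℝ), (0 : ℝ)) t := by
      simpa using (hasDerivAt_id t).prodMk (hasDerivAt_const t y)
    exact hd.comp_hasDerivAt t hline
  have key : ∫ t in a..b, fderiv ℝ u (t, y) ((1:ℝ), (0:ℝ)) = u (b, y) - u (a, y) :=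
    intervalIntegral.integral_eq_sub_of_hasDerivAt hderiv (hcont.intervalIntegrable a b)
  have h1 : |u (a, y)| ≤ |u (b, y)| + |u (b, y) - u (a, y)| := by
    calc |u (a, y)| = |u (b, y) + (u (a,y) - u (b,y))| := by ring_nf
      _ ≤ |u (b, y)| + |u (a,y) - u (b,y)| := abs_add_le _ _
      _ = |u (b, y)| + |u (b, y) - u (a, y)| := by rw [abs_sub_comm]
  have h2 : |u (b, y) - u (a, y)| ≤ ∫ t in a..b, |fderiv ℝ u (t, y) ((1:ℝ), (0:ℝ))| := by
    rw [← key]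
    exact intervalIntegral.abs_integral_le_integral_abs hab
  linarith

lemma ftc_col {u : ℝ × ℝ → ℝ} (hu : ContDiff ℝ 1 u) (x c d : ℝ) (hcd : c ≤ d) :
    |u (x, c)| ≤ |u (x, d)| + ∫ s in c..d, |fderiv ℝ u (x, s) (0, 1)| := by
  have hcont : Continuous fun s : ℝ => fderiv ℝ u (x, s) ((0 : ℝ), (1 : ℝ)) := by
    have h1 : Continuous (fderiv ℝ u) := hu.continuous_fderiv one_ne_zero
    have h2 : Continuous fun s : ℝ => ((x, s) : ℝ × ℝ) := continuous_const.prodMk continuous_id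
    exact (h1.comp h2).clm_apply continuous_const
  have hderiv : ∀ s ∈ uIcc c d,
      HasDerivAt (fun s : ℝ => u (x, s)) (fderiv ℝ u (x, s) ((0:ℝ), (1:ℝ))) s := by
    intro s _
    have hd : HasFDerivAt u (fderiv ℝ u (x, s)) (x, s) :=
      (hu.differentiable one_ne_zero (x, s)).hasFDerivAt
    have hline : HasDerivAt (fun s : ℝ => ((x, s) : ℝ × ℝ)) ((0 : ℝ), (1 : ℝ)) s := by
      simpa using (hasDerivAt_const s x).prodMk (hasDerivAt_id s)
    exact hd.comp_hasDerivAt s hline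
  have key : ∫ s in c..d, fderiv ℝ u (x, s) ((0:ℝ), (1:ℝ)) = u (x, d) - u (x, c) :=
    intervalIntegral.integral_eq_sub_of_hasDerivAt hderiv (hcont.intervalIntegrable c d)
  have h1 : |u (x, c)| ≤ |u (x, d)| + |u (x, d) - u (x, c)| := by
    calc |u (x, c)| = |u (x, d) + (u (x,c) - u (x,d))| := by ring_nf
      _ ≤ |u (x, d)| + |u (x,c) - u (x,d)| := abs_add_le _ _
      _ = |u (x, d)| + |u (x, d) - u (x, c)| := by rw [abs_sub_comm]
  have h2 : |u (x, d) - u (x, c)| ≤ ∫ s in c..d, |fderiv ℝ u (x, s) ((0:ℝ), (1:ℝ))| := by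
    rw [← key]
    exact intervalIntegral.abs_integral_le_integral_abs hcd
  linarith

end WSIAux

/-- For `α > -1/2`, one has
`‖|x₁|^α u‖²_{L²([0,1]²)} ≤ C ‖|x₁|^α ∂₁u‖_{L¹([0,1]²)} ‖|x₁|^α ∂₂u‖_{L¹([0,1]²)}`
for all `u ∈ C¹([0,1]²)` vanishing on the sides `x₁ = 1` and `x₂ = 1`. -/
theorem weighted_square_inequality (α : ℝ) (hα : -(1/2 : ℝ) < α) :
    ∃ C : ℝ, 0 < C ∧ ∀ u : ℝ × ℝ → ℝ, ContDiff ℝ 1 u →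
      (∀ t ∈ Set.Icc (0 : ℝ) 1, u (1, t) = 0 ∧ u (t, 1) = 0) →
      (∫ x in Set.Icc ((0 : ℝ), (0 : ℝ)) (1, 1), (|x.1| ^ α * |u x|) ^ (2 : ℝ)) ≤
        C * (∫ x in Set.Icc ((0 : ℝ), (0 : ℝ)) (1, 1),
              |x.1| ^ α * |fderiv ℝ u x (1, 0)|) *
            (∫ x in Set.Icc ((0 : ℝ), (0 : ℝ)) (1, 1),
              |x.1| ^ α * |fderiv ℝ u x (0, 1)|) := by
  classical
  have hδpos : (0:ℝ) < (2:ℝ) ^ (-(2*α)) / 2 := by positivity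
  set lam : ℝ := Real.sqrt ((2:ℝ) ^ (-(2*α)) / 2) with hlam_def
  have hlam_pos : 0 < lam := Real.sqrt_pos.mpr hδpos
  have hlam_lt : lam < 1 := by
    have h2 : (2:ℝ) ^ (-(2*α)) < 2 ^ (1:ℝ) :=
      Real.rpow_lt_rpow_of_exponent_lt one_lt_two (by linarith)
    rw [Real.rpow_one] at h2
    have h3 : lam < Real.sqrt 1 := Real.sqrt_lt_sqrt hδpos.le (by linarith)
    simpa using h3
  have hlam_sq : lam ^ 2 = (2:ℝ) ^ (-(2*α)) / 2 := Real.sq_sqrt hδpos.le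
  set K : ℝ := (2:ℝ) ^ |α| with hK_def
  have hKpos : (0:ℝ) < K := Real.rpow_pos_of_pos two_pos _
  refine ⟨K / (1 - lam), div_pos hKpos (by linarith), ?_⟩
  intro u hu hedge
  have hcu : Continuous u := hu.continuous
  have hcf : Continuous (fderiv ℝ u) := hu.continuous_fderiv one_ne_zero
  set d1 : ℝ × ℝ → ℝ := fun p => fderiv ℝ u p (1, 0) with hd1_def
  set d2 : ℝ × ℝ → ℝ := fun p => fderiv ℝ u p (0, 1) with hd2_def
  have hc1 : Continuous d1 := hcf.clm_apply continuous_const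
  have hc2 : Continuous d2 := hcf.clm_apply continuous_const
  set Io : Set ℝ := Ioc (0:ℝ) 1 with hIo_def
  set W : ℝ → ℝ≥0∞ := fun x => ENNReal.ofReal (|x| ^ α) with hW_def
  have hWm : Measurable W := (WSIAux.measurable_weight α).ennreal_ofReal
  have hWnt : ∀ x, W x ≠ ⊤ := fun x => ENNReal.ofReal_ne_top
  set mm : ℝ → ℝ := fun x => min (2*x) 1 with hmm_def
  set F0 : ℝ × ℝ → ℝ := fun p => (|p.1| ^ α * |u p|) ^ 2 with hF0_def
  have hF0m : Measurable fun p : ℝ × ℝ => ENNReal.ofReal (F0 p) :=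
    ((((WSIAux.measurable_weight α).comp measurable_fst).mul
      hcu.abs.measurable).pow_const 2).ennreal_ofReal
  set F1 : ℝ → ℝ → ℝ := fun x y => (|x| ^ α * |u (mm x, y)|) ^ 2 with hF1_def
  have hmmc : Continuous mm := ((continuous_const.mul continuous_id : Continuous fun x : ℝ => 2 * x)).min continuous_const
  have hF1m : Measurable fun p : ℝ × ℝ => ENNReal.ofReal (F1 p.1 p.2) := by
    apply Measurable.ennreal_ofReal
    apply Measurable.pow_const
    exact ((WSIAux.measurable_weight α).comp measurable_fst).mul
      ((hcu.comp ((hmmc.comp continuous_fst).prodMk continuous_snd)).abs.measurable)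
  set I : ℝ≥0∞ := ∫⁻ x in Io, ∫⁻ y in Io, ENNReal.ofReal (F0 (x, y)) with hI_def
  set G2 : ℝ → ℝ≥0∞ := fun x => ∫⁻ s in Io, ENNReal.ofReal |d2 (x, s)| with hG2_def
  have hG2m : Measurable G2 := Measurable.lintegral_prod_right' (hc2.abs.measurable.ennreal_ofReal)
  set Phi : ℝ → ℝ≥0∞ := fun t => W t * ∫⁻ y in Io, ENNReal.ofReal |d1 (t, y)| with hPhi_def
  have hPhim : Measurable Phi :=
    hWm.mul (Measurable.lintegral_prod_right' (hc1.abs.measurable.ennreal_ofReal))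
  set N1 : ℝ≥0∞ := ∫⁻ t in Io, Phi t with hN1_def
  set N2 : ℝ≥0∞ := ∫⁻ x in Io, W x * G2 x with hN2_def
  -- basic facts
  have hIovol : volume Io = 1 := by
    rw [hIo_def, Real.volume_Ioc]
    norm_num
  have hmem : ∀ {x y : ℝ}, x ∈ Io → y ∈ Io → ((x,y) : ℝ×ℝ) ∈ Icc ((0:ℝ),(0:ℝ)) (1,1) := by
    intro x y hx hy
    exact ⟨⟨hx.1.le, hy.1.le⟩, ⟨hx.2, hy.2⟩⟩
  have hSQcompact : IsCompact (Icc ((0:ℝ),(0:ℝ)) (1,1)) := isCompact_Icc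
  obtain ⟨M, hM⟩ := hSQcompact.exists_bound_of_continuousOn hcu.continuousOn
  obtain ⟨M1, hM1⟩ := hSQcompact.exists_bound_of_continuousOn hc1.continuousOn
  obtain ⟨M2, hM2⟩ := hSQcompact.exists_bound_of_continuousOn hc2.continuousOn
  have hM0 : 0 ≤ M := by
    have h := hM ((0:ℝ),(0:ℝ)) ⟨le_rfl, ⟨by norm_num, by norm_num⟩⟩
    exact le_trans (norm_nonneg _) h
  -- integrability of the weight
  have hwint : ∀ (β : ℝ), -1 < β → ∫⁻ x in Io, ENNReal.ofReal (|x| ^ β) < ⊤ := by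
    intro β hβ
    have h1 : ∫⁻ x in Io, ENNReal.ofReal (|x| ^ β) = ∫⁻ x in Io, ENNReal.ofReal (x ^ β) := by
      apply setLIntegral_congr_fun measurableSet_Ioc
      exact fun x hx => by rw [abs_of_pos hx.1]
    rw [h1]
    have h2 : IntegrableOn (fun x : ℝ => x ^ β) (Ioc (0:ℝ) 1) volume :=
      (intervalIntegral.intervalIntegrable_rpow' hβ).1
    exact h2.lintegral_lt_top
  have hwsq : ∀ x : ℝ, (|x| ^ α) ^ 2 = |x| ^ (2*α) := by
    intro x
    rw [← Real.rpow_natCast (|x| ^ α) 2, ← Real.rpow_mul (abs_nonneg x)]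
    norm_num [mul_comm]
  -- finiteness of I
  have hIfin : I ≠ ⊤ := by
    have hbound : I ≤ ENNReal.ofReal (M^2) * ∫⁻ x in Io, ENNReal.ofReal (|x| ^ (2*α)) := by
      rw [hI_def]
      have hstep1 : ∀ x ∈ Io, (∫⁻ y in Io, ENNReal.ofReal (F0 (x,y)))
          ≤ ENNReal.ofReal (M^2 * |x| ^ (2*α)) := by
        intro x hx
        have hb : ∀ y ∈ Io, ENNReal.ofReal (F0 (x,y)) ≤ ENNReal.ofReal (M^2 * |x| ^ (2*α)) := by
          intro y hy
          apply ENNReal.ofReal_le_ofReal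
          have h1 : |u (x,y)| ≤ M := by
            have := hM _ (hmem hx hy)
            simpa [Real.norm_eq_abs] using this
          have h2 : (0:ℝ) ≤ |x| ^ α := Real.rpow_nonneg (abs_nonneg x) α
          have h3 : (|x| ^ α * |u (x,y)|) ^ 2 ≤ (|x| ^ α * M) ^ 2 := by
            apply pow_le_pow_left₀ (by positivity)
            exact mul_le_mul_of_nonneg_left h1 h2
          calc F0 (x,y) = (|x| ^ α * |u (x,y)|) ^ 2 := rfl
            _ ≤ (|x| ^ α * M) ^ 2 := h3
            _ = M^2 * |x| ^ (2*α) := by rw [mul_pow, hwsq]; ring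
        calc (∫⁻ y in Io, ENNReal.ofReal (F0 (x,y)))
            ≤ ∫⁻ y in Io, ENNReal.ofReal (M^2 * |x| ^ (2*α)) :=
              lintegral_mono_ae ((ae_restrict_iff' measurableSet_Ioc).2 (ae_of_all _ hb))
          _ = ENNReal.ofReal (M^2 * |x| ^ (2*α)) := by
              rw [setLIntegral_const, hIovol, mul_one]
      calc (∫⁻ x in Io, ∫⁻ y in Io, ENNReal.ofReal (F0 (x,y)))
          ≤ ∫⁻ x in Io, ENNReal.ofReal (M^2 * |x| ^ (2*α)) :=
            lintegral_mono_ae ((ae_restrict_iff' measurableSet_Ioc).2 (ae_of_all _ hstep1))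
        _ = ∫⁻ x in Io, ENNReal.ofReal (M^2) * ENNReal.ofReal (|x| ^ (2*α)) := by
            apply lintegral_congr
            intro x
            rw [ENNReal.ofReal_mul (by positivity)]
        _ = ENNReal.ofReal (M^2) * ∫⁻ x in Io, ENNReal.ofReal (|x| ^ (2*α)) :=
            lintegral_const_mul' _ _ ENNReal.ofReal_ne_top
    have hfin : ENNReal.ofReal (M^2) * (∫⁻ x in Io, ENNReal.ofReal (|x| ^ (2*α))) < ⊤ :=
      ENNReal.mul_lt_top ENNReal.ofReal_lt_top (hwint (2*α) (by linarith))
    exact ne_top_of_le_ne_top hfin.ne hbound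
  -- finiteness of N1
  have hN1fin : N1 ≠ ⊤ := by
    have hbound : N1 ≤ ENNReal.ofReal M1 * ∫⁻ t in Io, ENNReal.ofReal (|t| ^ α) := by
      rw [hN1_def]
      have hstep1 : ∀ t ∈ Io, Phi t ≤ ENNReal.ofReal (|t| ^ α) * ENNReal.ofReal M1 := by
        intro t ht
        rw [hPhi_def]
        apply mul_le_mul_right
        calc (∫⁻ y in Io, ENNReal.ofReal |d1 (t,y)|)
            ≤ ∫⁻ y in Io, ENNReal.ofReal M1 := by
              refine lintegral_mono_ae ((ae_restrict_iff' measurableSet_Ioc).2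
                (ae_of_all _ fun y hy => ENNReal.ofReal_le_ofReal ?_))
              have := hM1 _ (hmem ht hy)
              simpa [Real.norm_eq_abs] using this
          _ = ENNReal.ofReal M1 := by rw [setLIntegral_const, hIovol, mul_one]
      calc (∫⁻ t in Io, Phi t)
          ≤ ∫⁻ t in Io, ENNReal.ofReal (|t| ^ α) * ENNReal.ofReal M1 :=
            lintegral_mono_ae ((ae_restrict_iff' measurableSet_Ioc).2 (ae_of_all _ hstep1))
        _ = (∫⁻ t in Io, ENNReal.ofReal (|t| ^ α)) * ENNReal.ofReal M1 :=
            lintegral_mul_const' _ _ ENNReal.ofReal_ne_top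
        _ = ENNReal.ofReal M1 * ∫⁻ t in Io, ENNReal.ofReal (|t| ^ α) := mul_comm _ _
    have hfin : ENNReal.ofReal M1 * (∫⁻ t in Io, ENNReal.ofReal (|t| ^ α)) < ⊤ :=
      ENNReal.mul_lt_top ENNReal.ofReal_lt_top (hwint α (by linarith))
    exact ne_top_of_le_ne_top hfin.ne hbound
  -- G2 is finite everywhere, and N2 is finite
  have hG2fin : ∀ x : ℝ, G2 x ≠ ⊤ := by
    intro x
    obtain ⟨c, hc⟩ := (isCompact_Icc : IsCompact (Icc (0:ℝ) 1)).exists_bound_of_continuousOn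
      ((hc2.comp (continuous_const.prodMk continuous_id)).continuousOn)
    have hle : G2 x ≤ ENNReal.ofReal c := by
      rw [hG2_def]
      calc (∫⁻ s in Io, ENNReal.ofReal |d2 (x,s)|)
          ≤ ∫⁻ s in Io, ENNReal.ofReal c := by
            refine lintegral_mono_ae ((ae_restrict_iff' measurableSet_Ioc).2
              (ae_of_all _ fun s hs => ENNReal.ofReal_le_ofReal ?_))
            have := hc s ⟨hs.1.le, hs.2⟩
            simpa [Real.norm_eq_abs] using this
        _ = ENNReal.ofReal c := by rw [setLIntegral_const, hIovol, mul_one]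
    exact ne_top_of_le_ne_top ENNReal.ofReal_ne_top hle
  have hN2fin : N2 ≠ ⊤ := by
    have hbound : N2 ≤ ENNReal.ofReal M2 * ∫⁻ x in Io, ENNReal.ofReal (|x| ^ α) := by
      rw [hN2_def]
      have hstep1 : ∀ x ∈ Io, W x * G2 x ≤ ENNReal.ofReal (|x| ^ α) * ENNReal.ofReal M2 := by
        intro x hx
        apply mul_le_mul_right
        rw [hG2_def]
        calc (∫⁻ s in Io, ENNReal.ofReal |d2 (x,s)|)
            ≤ ∫⁻ s in Io, ENNReal.ofReal M2 := by
              refine lintegral_mono_ae ((ae_restrict_iff' measurableSet_Ioc).2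
                (ae_of_all _ fun s hs => ENNReal.ofReal_le_ofReal ?_))
              have := hM2 _ (hmem hx hs)
              simpa [Real.norm_eq_abs] using this
          _ = ENNReal.ofReal M2 := by rw [setLIntegral_const, hIovol, mul_one]
      calc (∫⁻ x in Io, W x * G2 x)
          ≤ ∫⁻ x in Io, ENNReal.ofReal (|x| ^ α) * ENNReal.ofReal M2 :=
            lintegral_mono_ae ((ae_restrict_iff' measurableSet_Ioc).2 (ae_of_all _ hstep1))
        _ = (∫⁻ x in Io, ENNReal.ofReal (|x| ^ α)) * ENNReal.ofReal M2 :=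
            lintegral_mul_const' _ _ ENNReal.ofReal_ne_top
        _ = ENNReal.ofReal M2 * ∫⁻ x in Io, ENNReal.ofReal (|x| ^ α) := mul_comm _ _
    have hfin : ENNReal.ofReal M2 * (∫⁻ x in Io, ENNReal.ofReal (|x| ^ α)) < ⊤ :=
      ENNReal.mul_lt_top ENNReal.ofReal_lt_top (hwint α (by linarith))
    exact ne_top_of_le_ne_top hfin.ne hbound
  have hPhifin : ∀ t : ℝ, Phi t ≠ ⊤ := by
    intro t
    obtain ⟨c, hc⟩ := (isCompact_Icc : IsCompact (Icc (0:ℝ) 1)).exists_bound_of_continuousOn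
      ((hc1.comp (continuous_const.prodMk continuous_id)).continuousOn)
    have hle : (∫⁻ y in Io, ENNReal.ofReal |d1 (t,y)|) ≤ ENNReal.ofReal c := by
      calc (∫⁻ y in Io, ENNReal.ofReal |d1 (t,y)|)
          ≤ ∫⁻ y in Io, ENNReal.ofReal c := by
            refine lintegral_mono_ae ((ae_restrict_iff' measurableSet_Ioc).2
              (ae_of_all _ fun y hy => ENNReal.ofReal_le_ofReal ?_))
            have := hc y ⟨hy.1.le, hy.2⟩
            simpa [Real.norm_eq_abs] using this
        _ = ENNReal.ofReal c := by rw [setLIntegral_const, hIovol, mul_one]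
    rw [hPhi_def]
    exact ENNReal.mul_ne_top ENNReal.ofReal_ne_top (ne_top_of_le_ne_top ENNReal.ofReal_ne_top hle)
  -- conversion: integral over a subinterval as indicator integral over Io
  have hconv : ∀ (A : Set ℝ) (f : ℝ → ℝ≥0∞), MeasurableSet A → A ⊆ Io →
      (∫⁻ t in A, f t) = ∫⁻ t in Io, A.indicator f t := by
    intro A f hAm hsub
    rw [lintegral_indicator hAm, Measure.restrict_restrict hAm,
      inter_eq_self_of_subset_left hsub]
  -- the local-in-t majorant appearing in the B-term
  set e : ℝ → ℝ → ℝ → ℝ≥0∞ := fun x t y =>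
    (Ioc x (mm x)).indicator (fun _ => (1:ℝ≥0∞)) t * (W t * ENNReal.ofReal |d1 (t, y)|)
    with he_def
  set g3 : ℝ → ℝ → ℝ≥0∞ := fun x y =>
    (W x * G2 x) * (ENNReal.ofReal K * ∫⁻ t in Io, e x t y) with hg3_def
  have hindnt : ∀ (s : Set ℝ) (t : ℝ), s.indicator (fun _ => (1:ℝ≥0∞)) t ≠ ⊤ := by
    intro s t
    by_cases h : t ∈ s <;> simp [h]
  have hindle : ∀ (s : Set ℝ) (t : ℝ), s.indicator (fun _ => (1:ℝ≥0∞)) t ≤ 1 := by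
    intro s t
    by_cases h : t ∈ s <;> simp [h]
  -- THE MASTER POINTWISE INEQUALITY
  have master : ∀ x ∈ Io, ∀ y ∈ Io,
      ENNReal.ofReal (F0 (x,y)) ≤
        ENNReal.ofReal (lam/2 * F0 (x,y)) + ENNReal.ofReal (1/(2*lam) * F1 x y) + g3 x y := by
    intro x hx y hy
    have hx0 : (0:ℝ) < x := hx.1
    have hxm : x ≤ mm x := le_min (by linarith) hx.2
    have hmm1 : mm x ≤ 1 := min_le_right _ _
    have hwa : (0:ℝ) ≤ |x| ^ α := Real.rpow_nonneg (abs_nonneg x) α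
    set a : ℝ := |u (x, y)| with ha_def
    set b : ℝ := |u (mm x, y)| with hb_def
    set A : ℝ := ∫ t in x..(mm x), |d1 (t, y)| with hA_def
    set R : ℝ := ∫ s in y..1, |d2 (x, s)| with hR_def
    have hA0 : (0:ℝ) ≤ A := by
      rw [hA_def]
      exact intervalIntegral.integral_nonneg hxm (fun t _ => abs_nonneg _)
    have hR0 : (0:ℝ) ≤ R := by
      rw [hR_def]
      exact intervalIntegral.integral_nonneg hy.2 (fun s _ => abs_nonneg _)
    have haA : a ≤ b + A := WSIAux.ftc_row hu y x (mm x) hxm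
    have haR : a ≤ R := by
      have h := WSIAux.ftc_col hu x y 1 hy.2
      rw [(hedge x ⟨hx.1.le, hx.2⟩).2] at h
      simpa using h
    -- the real inequality
    have hreal : F0 (x,y) ≤ lam/2 * F0 (x,y) + 1/(2*lam) * F1 x y + (|x|^α * R) * (|x|^α * A) := by
      have hF0eq : F0 (x,y) = (|x|^α * a) * (|x|^α * a) := by
        rw [hF0_def, ha_def]
        ring
      have hF1eq : F1 x y = (|x|^α * b) ^ 2 := by rw [hF1_def, hb_def]
      have ha0 : (0:ℝ) ≤ a := abs_nonneg _
      have key : (|x|^α * a) * (|x|^α * a) ≤ (|x|^α * a) * (|x|^α * (b + A)) :=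
        mul_le_mul_of_nonneg_left (mul_le_mul_of_nonneg_left haA hwa) (by positivity)
      have hy1 : (|x|^α*a)*(|x|^α*b) ≤ lam/2 * (|x|^α*a)^2 + 1/(2*lam)*(|x|^α*b)^2 :=
        WSIAux.young_ineq hlam_pos
      have hy2 : (|x|^α*a)*(|x|^α*A) ≤ (|x|^α*R)*(|x|^α*A) :=
        mul_le_mul_of_nonneg_right (mul_le_mul_of_nonneg_left haR hwa) (by positivity)
      have hexp : (|x|^α * a) * (|x|^α * (b + A))
          = (|x|^α*a)*(|x|^α*b) + (|x|^α*a)*(|x|^α*A) := by ring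
      have hF0sq : (|x|^α * a)^2 = F0 (x,y) := by rw [hF0eq]; ring
      calc F0 (x,y) = (|x|^α * a) * (|x|^α * a) := hF0eq
        _ ≤ (|x|^α * a) * (|x|^α * (b + A)) := key
        _ = (|x|^α*a)*(|x|^α*b) + (|x|^α*a)*(|x|^α*A) := hexp
        _ ≤ (lam/2 * (|x|^α*a)^2 + 1/(2*lam)*(|x|^α*b)^2) + (|x|^α*R)*(|x|^α*A) :=
            add_le_add hy1 hy2
        _ = lam/2 * F0 (x,y) + 1/(2*lam) * F1 x y + (|x|^α * R) * (|x|^α * A) := by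
            rw [hF0sq, hF1eq]
    -- last term dominated by g3
    have hlast : ENNReal.ofReal ((|x|^α * R) * (|x|^α * A)) ≤ g3 x y := by
      rw [ENNReal.ofReal_mul (by positivity), hg3_def]
      apply mul_le_mul'
      · -- ofReal (|x|^α * R) ≤ W x * G2 x
        rw [ENNReal.ofReal_mul hwa]
        apply mul_le_mul_right
        have hcR : Continuous fun s : ℝ => d2 (x, s) :=
          hc2.comp (continuous_const.prodMk continuous_id)
        rw [hR_def, WSIAux.ofReal_intervalIntegral_abs hcR hy.2, hG2_def]
        exact lintegral_mono_set (Ioc_subset_Ioc_left hy.1.le)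
      · -- ofReal (|x|^α * A) ≤ ofReal K * ∫⁻ t in Io, e x t y
        rw [ENNReal.ofReal_mul hwa]
        have hcA : Continuous fun t : ℝ => d1 (t, y) :=
          hc1.comp (continuous_id.prodMk continuous_const)
        rw [hA_def, WSIAux.ofReal_intervalIntegral_abs hcA hxm]
        have hsub : Ioc x (mm x) ⊆ Io := fun t ht => ⟨lt_trans hx0 ht.1, le_trans ht.2 hmm1⟩
        calc ENNReal.ofReal (|x| ^ α) * ∫⁻ t in Ioc x (mm x), ENNReal.ofReal |d1 (t,y)|
            = ∫⁻ t in Ioc x (mm x), ENNReal.ofReal (|x| ^ α) * ENNReal.ofReal |d1 (t,y)| :=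
              (lintegral_const_mul' _ _ ENNReal.ofReal_ne_top).symm
          _ ≤ ∫⁻ t in Ioc x (mm x), ENNReal.ofReal K * (W t * ENNReal.ofReal |d1 (t,y)|) := by
              refine lintegral_mono_ae ((ae_restrict_iff' measurableSet_Ioc).2
                (ae_of_all _ fun t ht => ?_))
              have hcmp : |x| ^ α ≤ K * |t| ^ α := by
                rw [hK_def]
                exact WSIAux.weight_cmp hx0.le ht.1.le (le_trans ht.2 (min_le_left _ _))
              calc ENNReal.ofReal (|x| ^ α) * ENNReal.ofReal |d1 (t,y)|
                  ≤ ENNReal.ofReal (K * |t|^α) * ENNReal.ofReal |d1 (t,y)| :=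
                    mul_le_mul_left (ENNReal.ofReal_le_ofReal hcmp) _
                _ = ENNReal.ofReal K * (W t * ENNReal.ofReal |d1 (t,y)|) := by
                    rw [ENNReal.ofReal_mul hKpos.le, hW_def, mul_assoc]
          _ = ENNReal.ofReal K * ∫⁻ t in Ioc x (mm x), W t * ENNReal.ofReal |d1 (t,y)| :=
              lintegral_const_mul' _ _ ENNReal.ofReal_ne_top
          _ = ENNReal.ofReal K * ∫⁻ t in Io, e x t y := by
              rw [hconv _ _ measurableSet_Ioc hsub]
              congr 1
              apply lintegral_congr
              intro t
              by_cases h : t ∈ Ioc x (mm x)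
              · simp [he_def, Set.indicator_of_mem h]
              · simp [he_def, Set.indicator_of_notMem h]
    calc ENNReal.ofReal (F0 (x,y))
        ≤ ENNReal.ofReal (lam/2 * F0 (x,y) + 1/(2*lam) * F1 x y + (|x|^α*R)*(|x|^α*A)) :=
          ENNReal.ofReal_le_ofReal hreal
      _ ≤ ENNReal.ofReal (lam/2 * F0 (x,y) + 1/(2*lam) * F1 x y)
          + ENNReal.ofReal ((|x|^α*R)*(|x|^α*A)) := ENNReal.ofReal_add_le
      _ ≤ (ENNReal.ofReal (lam/2 * F0 (x,y)) + ENNReal.ofReal (1/(2*lam) * F1 x y))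
          + ENNReal.ofReal ((|x|^α*R)*(|x|^α*A)) := add_le_add_left ENNReal.ofReal_add_le _
      _ ≤ ENNReal.ofReal (lam/2 * F0 (x,y)) + ENNReal.ofReal (1/(2*lam) * F1 x y) + g3 x y := by
          exact add_le_add_right hlast _
  have hF0mr : Measurable F0 :=
    (((WSIAux.measurable_weight α).comp measurable_fst).mul hcu.abs.measurable).pow_const 2
  have hF1mr : Measurable fun p : ℝ × ℝ => F1 p.1 p.2 := by
    apply Measurable.pow_const
    exact ((WSIAux.measurable_weight α).comp measurable_fst).mul
      ((hcu.comp ((hmmc.comp continuous_fst).prodMk continuous_snd)).abs.measurable)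
  -- integrate the master inequality and split
  have hstep : I ≤ (∫⁻ x in Io, ∫⁻ y in Io, ENNReal.ofReal (lam/2 * F0 (x,y)))
      + (∫⁻ x in Io, ∫⁻ y in Io, ENNReal.ofReal (1/(2*lam) * F1 x y))
      + ∫⁻ x in Io, ∫⁻ y in Io, g3 x y := by
    have h1 : I ≤ ∫⁻ x in Io, ∫⁻ y in Io,
        (ENNReal.ofReal (lam/2 * F0 (x,y)) + ENNReal.ofReal (1/(2*lam) * F1 x y) + g3 x y) := by
      rw [hI_def]
      refine lintegral_mono_ae ((ae_restrict_iff' measurableSet_Ioc).2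
        (ae_of_all _ fun x hx => ?_))
      refine lintegral_mono_ae ((ae_restrict_iff' measurableSet_Ioc).2
        (ae_of_all _ fun y hy => ?_))
      exact master x hx y hy
    refine le_trans h1 (le_of_eq ?_)
    have hinner : ∀ x : ℝ, (∫⁻ y in Io,
        (ENNReal.ofReal (lam/2 * F0 (x,y)) + ENNReal.ofReal (1/(2*lam) * F1 x y) + g3 x y))
        = (∫⁻ y in Io, ENNReal.ofReal (lam/2 * F0 (x,y)))
          + (∫⁻ y in Io, ENNReal.ofReal (1/(2*lam) * F1 x y))
          + ∫⁻ y in Io, g3 x y := by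
      intro x
      have hm1 : Measurable fun y => ENNReal.ofReal (lam/2 * F0 (x,y)) :=
        ((hF0mr.comp measurable_prodMk_left).const_mul (lam/2)).ennreal_ofReal
      have hm2 : Measurable fun y => ENNReal.ofReal (1/(2*lam) * F1 x y) :=
        (((hF1mr.comp measurable_prodMk_left)).const_mul (1/(2*lam))).ennreal_ofReal
      rw [lintegral_add_left (hm1.fun_add hm2), lintegral_add_left hm1]
    have hAm : Measurable fun x => ∫⁻ y in Io, ENNReal.ofReal (lam/2 * F0 (x,y)) :=
      Measurable.lintegral_prod_right' ((hF0mr.const_mul (lam/2)).ennreal_ofReal)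
    have hBm : Measurable fun x => ∫⁻ y in Io, ENNReal.ofReal (1/(2*lam) * F1 x y) :=
      Measurable.lintegral_prod_right' ((hF1mr.const_mul (1/(2*lam))).ennreal_ofReal)
    calc (∫⁻ x in Io, ∫⁻ y in Io,
        (ENNReal.ofReal (lam/2 * F0 (x,y)) + ENNReal.ofReal (1/(2*lam) * F1 x y) + g3 x y))
        = ∫⁻ x in Io, ((∫⁻ y in Io, ENNReal.ofReal (lam/2 * F0 (x,y)))
          + (∫⁻ y in Io, ENNReal.ofReal (1/(2*lam) * F1 x y))
          + ∫⁻ y in Io, g3 x y) := lintegral_congr hinner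
      _ = _ := by rw [lintegral_add_left (hAm.fun_add hBm), lintegral_add_left hAm]
  -- evaluate the first term
  have hg1eval : (∫⁻ x in Io, ∫⁻ y in Io, ENNReal.ofReal (lam/2 * F0 (x,y)))
      = ENNReal.ofReal (lam/2) * I := by
    have hpt : ∀ x y : ℝ, ENNReal.ofReal (lam/2 * F0 (x,y))
        = ENNReal.ofReal (lam/2) * ENNReal.ofReal (F0 (x,y)) :=
      fun x y => ENNReal.ofReal_mul (by positivity)
    calc (∫⁻ x in Io, ∫⁻ y in Io, ENNReal.ofReal (lam/2 * F0 (x,y)))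
        = ∫⁻ x in Io, ENNReal.ofReal (lam/2) * ∫⁻ y in Io, ENNReal.ofReal (F0 (x,y)) := by
          apply lintegral_congr
          intro x
          rw [← lintegral_const_mul' _ _ ENNReal.ofReal_ne_top]
          exact lintegral_congr fun y => hpt x y
      _ = ENNReal.ofReal (lam/2) * I := lintegral_const_mul' _ _ ENNReal.ofReal_ne_top
  -- evaluate the second term
  have hg2eval : (∫⁻ x in Io, ∫⁻ y in Io, ENNReal.ofReal (1/(2*lam) * F1 x y))
      = ENNReal.ofReal (1/(2*lam)) * ∫⁻ x in Io, ∫⁻ y in Io, ENNReal.ofReal (F1 x y) := by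
    have hpt : ∀ x y : ℝ, ENNReal.ofReal (1/(2*lam) * F1 x y)
        = ENNReal.ofReal (1/(2*lam)) * ENNReal.ofReal (F1 x y) :=
      fun x y => ENNReal.ofReal_mul (by positivity)
    calc (∫⁻ x in Io, ∫⁻ y in Io, ENNReal.ofReal (1/(2*lam) * F1 x y))
        = ∫⁻ x in Io, ENNReal.ofReal (1/(2*lam)) * ∫⁻ y in Io, ENNReal.ofReal (F1 x y) := by
          apply lintegral_congr
          intro x
          rw [← lintegral_const_mul' _ _ ENNReal.ofReal_ne_top]
          exact lintegral_congr fun y => hpt x y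
      _ = _ := lintegral_const_mul' _ _ ENNReal.ofReal_ne_top
  -- rescaling: the F1 integral is a dilation of I
  have hI1 : (∫⁻ x in Io, ∫⁻ y in Io, ENNReal.ofReal (F1 x y))
      = (ENNReal.ofReal |(2:ℝ)⁻¹| * ENNReal.ofReal ((2:ℝ)^(-(2*α)))) * I := by
    set H0 : ℝ → ℝ≥0∞ := fun z => ∫⁻ y in Io, ENNReal.ofReal (F0 (z, y)) with hH0_def
    have hH0m : Measurable H0 := Measurable.lintegral_prod_right' hF0m
    have hIoSplit : (∫⁻ x in Io, ∫⁻ y in Io, ENNReal.ofReal (F1 x y))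
        = ∫⁻ x in Ioc (0:ℝ) (1/2:ℝ) ∪ Ioc (1/2:ℝ) 1, ∫⁻ y in Io, ENNReal.ofReal (F1 x y) := by
      rw [Ioc_union_Ioc_eq_Ioc (by norm_num : (0:ℝ) ≤ 1/2) (by norm_num : (1/2:ℝ) ≤ 1)]
    rw [hIoSplit, lintegral_union measurableSet_Ioc (Ioc_disjoint_Ioc_of_le le_rfl)]
    have hpiece2 : (∫⁻ x in Ioc (1/2:ℝ) 1, ∫⁻ y in Io, ENNReal.ofReal (F1 x y)) = 0 := by
      have hz : ∀ x ∈ Ioc (1/2:ℝ) 1, (∫⁻ y in Io, ENNReal.ofReal (F1 x y)) = 0 := by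
        intro x hx
        have hmmx : mm x = 1 := min_eq_right (by linarith [hx.1] : (1:ℝ) ≤ 2*x)
        have hz2 : ∀ y ∈ Io, ENNReal.ofReal (F1 x y) = 0 := by
          intro y hy
          have hu1 : u (1, y) = 0 := (hedge y ⟨hy.1.le, hy.2⟩).1
          simp [hF1_def, hmmx, hu1]
        calc (∫⁻ y in Io, ENNReal.ofReal (F1 x y)) = ∫⁻ y in Io, 0 :=
            setLIntegral_congr_fun measurableSet_Ioc hz2
          _ = 0 := lintegral_zero
      calc (∫⁻ x in Ioc (1/2:ℝ) 1, ∫⁻ y in Io, ENNReal.ofReal (F1 x y))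
          = ∫⁻ x in Ioc (1/2:ℝ) 1, 0 :=
            setLIntegral_congr_fun measurableSet_Ioc hz
        _ = 0 := lintegral_zero
    have hpiece1 : (∫⁻ x in Ioc (0:ℝ) (1/2:ℝ), ∫⁻ y in Io, ENNReal.ofReal (F1 x y))
        = ENNReal.ofReal ((2:ℝ)^(-(2*α))) * ∫⁻ x in Ioc (0:ℝ) (1/2:ℝ), H0 (2*x) := by
      rw [← lintegral_const_mul' _ _ ENNReal.ofReal_ne_top]
      apply setLIntegral_congr_fun measurableSet_Ioc
      refine fun x hx => ?_
      have hmmx : mm x = 2*x := min_eq_left (by linarith [hx.2])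
      have hpt : ∀ y : ℝ, ENNReal.ofReal (F1 x y)
          = ENNReal.ofReal ((2:ℝ)^(-(2*α))) * ENNReal.ofReal (F0 (2*x, y)) := by
        intro y
        have hfr : F1 x y = (2:ℝ)^(-(2*α)) * F0 (2*x, y) := by
          have h2x : |2*x| ^ α = 2^α * |x|^α := by
            rw [show |2*x| = 2 * |x| by rw [abs_mul]; norm_num,
              Real.mul_rpow (by norm_num) (abs_nonneg x)]
          have hid : (2:ℝ)^(-(2*α)) * ((2:ℝ)^α)^2 = 1 := by
            rw [← Real.rpow_natCast ((2:ℝ)^α) 2, ← Real.rpow_mul (by norm_num : (0:ℝ) ≤ 2),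
              ← Real.rpow_add two_pos]
            have : -(2*α) + α * (2:ℕ) = 0 := by push_cast; ring
            rw [this, Real.rpow_zero]
          simp only [hF1_def, hF0_def, hmmx]
          simp only [h2x]
          calc (|x|^α * |u (2*x,y)|)^2
              = ((2:ℝ)^(-(2*α)) * ((2:ℝ)^α)^2) * (|x|^α * |u (2*x,y)|)^2 := by rw [hid]; ring
            _ = (2:ℝ)^(-(2*α)) * ((2:ℝ)^α * |x|^α * |u (2*x, y)|)^2 := by ring
        rw [hfr, ENNReal.ofReal_mul (by positivity)]
      calc (∫⁻ y in Io, ENNReal.ofReal (F1 x y))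
          = ∫⁻ y in Io, ENNReal.ofReal ((2:ℝ)^(-(2*α))) * ENNReal.ofReal (F0 (2*x, y)) :=
            lintegral_congr fun y => hpt y
        _ = ENNReal.ofReal ((2:ℝ)^(-(2*α))) * H0 (2*x) :=
            lintegral_const_mul' _ _ ENNReal.ofReal_ne_top
    rw [hpiece1, hpiece2, add_zero, WSIAux.lintegral_double H0 hH0m]
    have hIeq : (∫⁻ z in Ioc (0:ℝ) 1, H0 z) = I := rfl
    rw [hIeq]
    ring
  -- bound the third term by K * N2 * N1
  have hg3eval : (∫⁻ x in Io, ∫⁻ y in Io, g3 x y) ≤ ENNReal.ofReal K * (N2 * N1) := by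
    have hswap1 : ∀ x : ℝ, (∫⁻ y in Io, ∫⁻ t in Io, e x t y)
        = ∫⁻ t in Io, ∫⁻ y in Io, e x t y := by
      intro x
      apply lintegral_lintegral_swap
      refine Measurable.aemeasurable ?_
      have hgoal : (Function.uncurry fun y t => e x t y)
          = fun q : ℝ × ℝ => (Ioc x (mm x)).indicator (fun _ => (1:ℝ≥0∞)) q.2
              * (W q.2 * ENNReal.ofReal |d1 (q.2, q.1)|) := by
        funext q
        simp only [Function.uncurry, he_def]
      rw [hgoal]
      exact (((measurable_const.indicator measurableSet_Ioc).comp measurable_snd)).mul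
        ((hWm.comp measurable_snd).mul
          ((hc1.abs.measurable.ennreal_ofReal).comp (measurable_snd.prodMk measurable_fst)))
    have hinner_y : ∀ x t : ℝ, (∫⁻ y in Io, e x t y)
        = (Ioc x (mm x)).indicator (fun _ => (1:ℝ≥0∞)) t * Phi t := by
      intro x t
      have hcnt : (Ioc x (mm x)).indicator (fun _ => (1:ℝ≥0∞)) t * W t ≠ ⊤ :=
        ENNReal.mul_ne_top (hindnt _ _) (hWnt t)
      calc (∫⁻ y in Io, e x t y)
          = ∫⁻ y in Io, ((Ioc x (mm x)).indicator (fun _ => (1:ℝ≥0∞)) t * W t)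
              * ENNReal.ofReal |d1 (t,y)| := by
            apply lintegral_congr
            intro y
            simp only [he_def]
            ring
        _ = ((Ioc x (mm x)).indicator (fun _ => (1:ℝ≥0∞)) t * W t)
            * ∫⁻ y in Io, ENNReal.ofReal |d1 (t,y)| := lintegral_const_mul' _ _ hcnt
        _ = (Ioc x (mm x)).indicator (fun _ => (1:ℝ≥0∞)) t * Phi t := by
            simp only [hPhi_def]
            ring
    have hx_collapse : ∀ x : ℝ, (∫⁻ y in Io, g3 x y)
        = ENNReal.ofReal K * ((W x * G2 x)
            * ∫⁻ t in Io, (Ioc x (mm x)).indicator (fun _ => (1:ℝ≥0∞)) t * Phi t) := by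
      intro x
      have hcnt : (W x * G2 x) * ENNReal.ofReal K ≠ ⊤ :=
        ENNReal.mul_ne_top (ENNReal.mul_ne_top (hWnt x) (hG2fin x)) ENNReal.ofReal_ne_top
      calc (∫⁻ y in Io, g3 x y)
          = ∫⁻ y in Io, ((W x * G2 x) * ENNReal.ofReal K) * ∫⁻ t in Io, e x t y := by
            apply lintegral_congr
            intro y
            simp only [hg3_def]
            ring
        _ = ((W x * G2 x) * ENNReal.ofReal K) * ∫⁻ y in Io, ∫⁻ t in Io, e x t y :=
            lintegral_const_mul' _ _ hcnt
        _ = ((W x * G2 x) * ENNReal.ofReal K) * ∫⁻ t in Io, ∫⁻ y in Io, e x t y := by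
            rw [hswap1 x]
        _ = ((W x * G2 x) * ENNReal.ofReal K)
            * ∫⁻ t in Io, (Ioc x (mm x)).indicator (fun _ => (1:ℝ≥0∞)) t * Phi t := by
            congr 1
            exact lintegral_congr fun t => hinner_y x t
        _ = _ := by ring
    have hswap2 : (∫⁻ x in Io, ∫⁻ t in Io,
          (W x * G2 x) * ((Ioc x (mm x)).indicator (fun _ => (1:ℝ≥0∞)) t * Phi t))
        = ∫⁻ t in Io, ∫⁻ x in Io,
          (W x * G2 x) * ((Ioc x (mm x)).indicator (fun _ => (1:ℝ≥0∞)) t * Phi t) := by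
      apply lintegral_lintegral_swap
      refine Measurable.aemeasurable ?_
      have hSmeas : MeasurableSet {q : ℝ × ℝ | q.1 < q.2 ∧ q.2 ≤ mm q.1} :=
        (measurableSet_lt measurable_fst measurable_snd).inter
          (measurableSet_le measurable_snd (hmmc.measurable.comp measurable_fst))
      have hgoal : (Function.uncurry fun x t => (W x * G2 x)
            * ((Ioc x (mm x)).indicator (fun _ => (1:ℝ≥0∞)) t * Phi t))
          = fun q : ℝ × ℝ => (W q.1 * G2 q.1)
            * ({q : ℝ × ℝ | q.1 < q.2 ∧ q.2 ≤ mm q.1}.indicator (fun _ => (1:ℝ≥0∞)) q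
              * Phi q.2) := by
        funext q
        simp only [Function.uncurry]
        by_cases h : q.2 ∈ Ioc q.1 (mm q.1)
        · rw [Set.indicator_of_mem h, Set.indicator_of_mem (show q ∈ _ from h)]
        · rw [Set.indicator_of_notMem h, Set.indicator_of_notMem (show q ∉ _ from h)]
      rw [hgoal]
      exact ((hWm.mul hG2m).comp measurable_fst).mul
        ((measurable_const.indicator hSmeas).mul (hPhim.comp measurable_snd))
    calc (∫⁻ x in Io, ∫⁻ y in Io, g3 x y)
        = ∫⁻ x in Io, ENNReal.ofReal K * ((W x * G2 x)
            * ∫⁻ t in Io, (Ioc x (mm x)).indicator (fun _ => (1:ℝ≥0∞)) t * Phi t) :=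
          lintegral_congr hx_collapse
      _ = ENNReal.ofReal K * ∫⁻ x in Io, (W x * G2 x)
            * ∫⁻ t in Io, (Ioc x (mm x)).indicator (fun _ => (1:ℝ≥0∞)) t * Phi t :=
          lintegral_const_mul' _ _ ENNReal.ofReal_ne_top
      _ = ENNReal.ofReal K * ∫⁻ x in Io, ∫⁻ t in Io, (W x * G2 x)
            * ((Ioc x (mm x)).indicator (fun _ => (1:ℝ≥0∞)) t * Phi t) := by
          congr 1
          apply lintegral_congr
          intro x
          exact (lintegral_const_mul' _ _ (ENNReal.mul_ne_top (hWnt x) (hG2fin x))).symm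
      _ = ENNReal.ofReal K * ∫⁻ t in Io, ∫⁻ x in Io, (W x * G2 x)
            * ((Ioc x (mm x)).indicator (fun _ => (1:ℝ≥0∞)) t * Phi t) := by rw [hswap2]
      _ ≤ ENNReal.ofReal K * ∫⁻ t in Io, ∫⁻ x in Io, (W x * G2 x) * Phi t := by
          apply mul_le_mul_right
          apply lintegral_mono
          intro t
          apply lintegral_mono
          intro x
          apply mul_le_mul_right
          calc (Ioc x (mm x)).indicator (fun _ => (1:ℝ≥0∞)) t * Phi t
              ≤ 1 * Phi t := mul_le_mul_left (hindle _ _) _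
            _ = Phi t := one_mul _
      _ = ENNReal.ofReal K * ∫⁻ t in Io, N2 * Phi t := by
          congr 1
          apply lintegral_congr
          intro t
          rw [lintegral_mul_const' _ _ (hPhifin t), hN2_def]
      _ = ENNReal.ofReal K * (N2 * ∫⁻ t in Io, Phi t) := by
          rw [lintegral_const_mul' _ _ hN2fin]
      _ = ENNReal.ofReal K * (N2 * N1) := by rw [hN1_def]
  -- combine everything in ℝ≥0∞
  have hmainE : I ≤ ENNReal.ofReal (lam/2) * I
      + ENNReal.ofReal (1/(2*lam)) * ((ENNReal.ofReal |(2:ℝ)⁻¹|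
          * ENNReal.ofReal ((2:ℝ)^(-(2*α)))) * I)
      + ENNReal.ofReal K * (N2 * N1) := by
    refine le_trans hstep ?_
    rw [hg1eval, hg2eval, hI1]
    exact add_le_add_right hg3eval _
  -- product-measure description of the square
  have hrestrict1 : (volume : Measure ℝ).restrict (Icc (0:ℝ) 1) = volume.restrict Io :=
    (Measure.restrict_congr_set Ioc_ae_eq_Icc).symm
  have hSQ : (volume : Measure (ℝ×ℝ)).restrict (Icc ((0:ℝ),(0:ℝ)) (1,1))
      = (volume.restrict Io).prod (volume.restrict Io) := by
    rw [show (Icc ((0:ℝ),(0:ℝ)) (1,1) : Set (ℝ×ℝ))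
        = (Icc (0:ℝ) 1) ×ˢ (Icc (0:ℝ) 1) from Icc_prod_eq _ _,
      Measure.volume_eq_prod, ← Measure.prod_restrict, hrestrict1]
  have hrpow2 : ∀ r : ℝ, r ^ (2:ℝ) = r ^ 2 := fun r => by
    rw [show (2:ℝ) = ((2:ℕ):ℝ) by norm_num, Real.rpow_natCast]
  -- identification of the three integrals in the statement
  have hLHS : (∫ x in Icc ((0:ℝ),(0:ℝ)) (1,1), (|x.1| ^ α * |u x|) ^ (2:ℝ)) = I.toReal := by
    have h1 : (∫ x in Icc ((0:ℝ),(0:ℝ)) (1,1), (|x.1| ^ α * |u x|) ^ (2:ℝ))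
        = ∫ x in Icc ((0:ℝ),(0:ℝ)) (1,1), F0 x := by
      apply integral_congr_ae
      refine ae_of_all _ fun p => ?_
      exact hrpow2 _
    rw [h1, integral_eq_lintegral_of_nonneg_ae
      (ae_of_all _ fun p => by simp only [hF0_def]; positivity) hF0mr.aestronglyMeasurable]
    congr 1
    rw [hSQ, lintegral_prod _ hF0m.aemeasurable]
  have hRHS1 : (∫ x in Icc ((0:ℝ),(0:ℝ)) (1,1), |x.1| ^ α * |fderiv ℝ u x (1, 0)|)
      = N1.toReal := by
    have hm : Measurable fun p : ℝ×ℝ => |p.1| ^ α * |d1 p| :=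
      ((WSIAux.measurable_weight α).comp measurable_fst).mul hc1.abs.measurable
    rw [integral_eq_lintegral_of_nonneg_ae
      (ae_of_all _ fun p => mul_nonneg (Real.rpow_nonneg (abs_nonneg _) _) (abs_nonneg _))
      hm.aestronglyMeasurable]
    congr 1
    rw [hSQ, lintegral_prod _ hm.ennreal_ofReal.aemeasurable, hN1_def]
    apply lintegral_congr
    intro t
    calc (∫⁻ y in Io, ENNReal.ofReal (|t| ^ α * |fderiv ℝ u (t,y) (1,0)|))
        = ∫⁻ y in Io, W t * ENNReal.ofReal |d1 (t,y)| := by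
          apply lintegral_congr
          intro y
          rw [ENNReal.ofReal_mul (Real.rpow_nonneg (abs_nonneg t) α)]
      _ = W t * ∫⁻ y in Io, ENNReal.ofReal |d1 (t,y)| :=
          lintegral_const_mul' _ _ ENNReal.ofReal_ne_top
      _ = Phi t := by rw [hPhi_def]
  have hRHS2 : (∫ x in Icc ((0:ℝ),(0:ℝ)) (1,1), |x.1| ^ α * |fderiv ℝ u x (0, 1)|)
      = N2.toReal := by
    have hm : Measurable fun p : ℝ×ℝ => |p.1| ^ α * |d2 p| :=
      ((WSIAux.measurable_weight α).comp measurable_fst).mul hc2.abs.measurable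
    rw [integral_eq_lintegral_of_nonneg_ae
      (ae_of_all _ fun p => mul_nonneg (Real.rpow_nonneg (abs_nonneg _) _) (abs_nonneg _))
      hm.aestronglyMeasurable]
    congr 1
    rw [hSQ, lintegral_prod _ hm.ennreal_ofReal.aemeasurable, hN2_def]
    apply lintegral_congr
    intro x
    calc (∫⁻ s in Io, ENNReal.ofReal (|x| ^ α * |fderiv ℝ u (x,s) (0,1)|))
        = ∫⁻ s in Io, W x * ENNReal.ofReal |d2 (x,s)| := by
          apply lintegral_congr
          intro s
          rw [ENNReal.ofReal_mul (Real.rpow_nonneg (abs_nonneg x) α)]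
      _ = W x * ∫⁻ s in Io, ENNReal.ofReal |d2 (x,s)| :=
          lintegral_const_mul' _ _ ENNReal.ofReal_ne_top
      _ = W x * G2 x := by rw [hG2_def]
  -- pass to real numbers
  have h1top : ENNReal.ofReal (lam/2) * I ≠ ⊤ :=
    ENNReal.mul_ne_top ENNReal.ofReal_ne_top hIfin
  have h2top : ENNReal.ofReal (1/(2*lam)) * ((ENNReal.ofReal |(2:ℝ)⁻¹|
      * ENNReal.ofReal ((2:ℝ)^(-(2*α)))) * I) ≠ ⊤ :=
    ENNReal.mul_ne_top ENNReal.ofReal_ne_top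
      (ENNReal.mul_ne_top (ENNReal.mul_ne_top ENNReal.ofReal_ne_top ENNReal.ofReal_ne_top) hIfin)
  have h3top : ENNReal.ofReal K * (N2 * N1) ≠ ⊤ :=
    ENNReal.mul_ne_top ENNReal.ofReal_ne_top (ENNReal.mul_ne_top hN2fin hN1fin)
  have hreal : I.toReal ≤ lam/2 * I.toReal
      + 1/(2*lam) * ((|(2:ℝ)⁻¹| * (2:ℝ)^(-(2*α))) * I.toReal)
      + K * (N2.toReal * N1.toReal) := by
    have h := ENNReal.toReal_mono (by
      exact ENNReal.add_ne_top.mpr ⟨ENNReal.add_ne_top.mpr ⟨h1top, h2top⟩, h3top⟩) hmainE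
    rw [ENNReal.toReal_add (ENNReal.add_ne_top.mpr ⟨h1top, h2top⟩) h3top,
      ENNReal.toReal_add h1top h2top,
      ENNReal.toReal_mul, ENNReal.toReal_mul, ENNReal.toReal_mul, ENNReal.toReal_mul,
      ENNReal.toReal_mul, ENNReal.toReal_mul,
      ENNReal.toReal_ofReal (by positivity : (0:ℝ) ≤ lam/2),
      ENNReal.toReal_ofReal (by positivity : (0:ℝ) ≤ 1/(2*lam)),
      ENNReal.toReal_ofReal (by positivity : (0:ℝ) ≤ |(2:ℝ)⁻¹|),
      ENNReal.toReal_ofReal (by positivity : (0:ℝ) ≤ (2:ℝ)^(-(2*α))),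
      ENNReal.toReal_ofReal hKpos.le] at h
    exact h
  have habs2 : |(2:ℝ)⁻¹| = 1/2 := by norm_num
  have hco : lam/2 + 1/(2*lam) * (1/2 * (2:ℝ)^(-(2*α))) = lam := by
    have h2 : (2:ℝ)^(-(2*α)) = 2 * lam^2 := by rw [hlam_sq]; ring
    rw [h2]
    field_simp
    ring
  have h1lam : (0:ℝ) < 1 - lam := by linarith
  have habstract2 : ∀ i c : ℝ,
      i ≤ lam/2 * i + 1/(2*lam) * ((1/2 * (2:ℝ)^(-(2*α))) * i) + c → i ≤ lam * i + c := by
    intro i c h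
    have hcoi : (lam/2 + 1/(2*lam) * (1/2 * (2:ℝ)^(-(2*α)))) * i = lam * i := by rw [hco]
    linarith only [h, hcoi]
  have habstract : ∀ i a b : ℝ, i ≤ lam * i + K * (b * a) → i ≤ K/(1-lam) * a * b := by
    intro i a b h
    rw [div_mul_eq_mul_div, div_mul_eq_mul_div, le_div_iff₀ h1lam]
    nlinarith only [h, h1lam]
  have hmain2 : I.toReal ≤ lam * I.toReal + K * (N2.toReal * N1.toReal) := by
    apply habstract2
    rw [habs2] at hreal
    exact hreal
  have hfinal : I.toReal ≤ K/(1-lam) * N1.toReal * N2.toReal :=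
    habstract _ _ _ hmain2
  rw [hLHS, hRHS1, hRHS2]
  exact hfinal

end
end

section
/- Let s, p, q, a, γ1, γ2, γ3, α, μ, β be real numbers with s,q>0, p≥1, 0≤a≤1, and let p' be defined by 1/p + 1/p' = 1. Define 1/s̄ = 1/s + 1/p', p̄ = 1, 1/q̄ = s/(q s̄), ā = a s /((1−a) s̄ + a s), γ̄1 = γ1 s/s̄, γ̄2 = γ1 s/p' + γ2, γ̄3 = γ3 s/s̄, ᾱ = α s/s̄, μ̄ = α s/p' + μ, β̄ = β s/s̄. Then: (i) if n ≥ 1 and (s,p,q,a,γ1,γ2,γ3) satisfy conditions (B1)–(B5), then (s̄,p̄,q̄,ā,γ̄1,γ̄2,γ̄3) also satisfy (B1)–(B5); (ii) if n ≥ 2 and (s,p,q,a,γ1,γ2,γ3,α,μ,β) satisfy conditions (A1)–(A8), then (s̄,p̄,q̄,ā,γ̄1,γ̄2,γ̄3,ᾱ,μ̄,β̄) also satisfy (A1)–(A8); (iii) 1/s ≤ a/p+(1−a)/q if and only if 1/s̄ ≤ ā/p̄+(1−ā)/q̄, and 1/s ≥ a(1/p−1/n)+(1−a)/q if and only if 1/s̄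 ≥ ā(1−1/n)+(1−ā)/q̄. Moreover 0 < s̄ < s whenever p > 1, and 0 < s̄ ≤ s always. -/
open Real

noncomputable section

/-- Condition (B1). -/
def B1 (s p q a : ℝ) : Prop := 0 < s ∧ 0 < q ∧ 1 ≤ p ∧ 0 ≤ a ∧ a ≤ 1

/-- Condition (B2). -/
def B2 (n : ℕ) (s p q g1 g2 g3 : ℝ) : Prop :=
  0 < 1/s + g1/(n : ℝ) ∧ 0 < 1/p + g2/(n : ℝ) ∧ 0 < 1/q + g3/(n : ℝ)

/-- Condition (B3). -/
def B3 (n : ℕ) (s p q a g1 g2 g3 : ℝ) : Prop :=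
  1/s + g1/(n : ℝ) = a * (1/p + (g2 - 1)/(n : ℝ)) + (1 - a) * (1/q + g3/(n : ℝ))

/-- Condition (B4). -/
def B4 (a g1 g2 g3 : ℝ) : Prop := g1 ≤ a * g2 + (1 - a) * g3

/-- Condition (B5). -/
def B5 (n : ℕ) (s p q a g1 g2 g3 : ℝ) : Prop :=
  (a = 0 ∨ a = 1 ∨
    (1/s + g1/(n : ℝ) = 1/p + (g2 - 1)/(n : ℝ) ∧
      1/p + (g2 - 1)/(n : ℝ) = 1/q + g3/(n : ℝ))) →
  1/s ≤ a/p + (1 - a)/q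

/-- Conditions (B1)-(B5) combined. -/
def condB (n : ℕ) (s p q a g1 g2 g3 : ℝ) : Prop :=
  B1 s p q a ∧ B2 n s p q g1 g2 g3 ∧ B3 n s p q a g1 g2 g3 ∧
    B4 a g1 g2 g3 ∧ B5 n s p q a g1 g2 g3

/-- Condition (A2). -/
def A2 (n : ℕ) (s p q α μ β : ℝ) : Prop :=
  0 < 1/s + α/((n : ℝ) - 1) ∧ 0 < 1/p + μ/((n : ℝ) - 1) ∧ 0 < 1/q + β/((n : ℝ) - 1)

/-- Condition (A3). -/
def A3 (n : ℕ) (s p q g1 g2 g3 α μ β : ℝ) : Prop :=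
  0 < 1/s + (α + g1)/(n : ℝ) ∧ 0 < 1/p + (μ + g2)/(n : ℝ) ∧ 0 < 1/q + (β + g3)/(n : ℝ)

/-- Condition (A4). -/
def A4 (n : ℕ) (s p q a g1 g2 g3 α μ β : ℝ) : Prop :=
  1/s + (g1 + α)/(n : ℝ) =
    a * (1/p + (g2 + μ - 1)/(n : ℝ)) + (1 - a) * (1/q + (g3 + β)/(n : ℝ))

/-- Condition (A6). -/
def A6 (a g1 g2 g3 α μ β : ℝ) : Prop :=
  g1 + α ≤ a * (g2 + μ) + (1 - a) * (g3 + β)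

/-- Condition (A7). -/
def A7 (n : ℕ) (s p q a α μ β : ℝ) : Prop :=
  a * (1/p + (μ - 1)/((n : ℝ) - 1)) + (1 - a) * (1/q + β/((n : ℝ) - 1)) ≤
    1/s + α/((n : ℝ) - 1)

/-- Condition (A8). -/
def A8 (n : ℕ) (s p q a g1 g2 g3 α μ β : ℝ) : Prop :=
  (a = 0 ∨ a = 1 ∨
    (1/p + (g2 + μ - 1)/(n : ℝ) = 1/q + (g3 + β)/(n : ℝ) ∧
      1/q + (g3 + β)/(n : ℝ) = 1/s + (g1 + α)/(n : ℝ)) ∨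
    1/s + α/((n : ℝ) - 1) =
      a * (1/p + (μ - 1)/((n : ℝ) - 1)) + (1 - a) * (1/q + β/((n : ℝ) - 1))) →
  1/s ≤ a/p + (1 - a)/q

/-- Conditions (A1)-(A8) combined. -/
def condA (n : ℕ) (s p q a g1 g2 g3 α μ β : ℝ) : Prop :=
  B1 s p q a ∧ A2 n s p q α μ β ∧ A3 n s p q g1 g2 g3 α μ β ∧
    A4 n s p q a g1 g2 g3 α μ β ∧ B4 a g1 g2 g3 ∧ A6 a g1 g2 g3 α μ β ∧
    A7 n s p q a α μ β ∧ A8 n s p q a g1 g2 g3 α μ β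

/-- `s̄`, defined by `1/s̄ = 1/s + 1/p'` where `1/p + 1/p' = 1` (so `1/p' = 1 - 1/p`). -/
def sbar (s p : ℝ) : ℝ := (1/s + (1 - 1/p))⁻¹

/-- `q̄`, defined by `1/q̄ = s/(q s̄)`. -/
def qbar (s p q : ℝ) : ℝ := q * sbar s p / s

/-- `ā = a s / ((1-a) s̄ + a s)`. -/
def abar (s p a : ℝ) : ℝ := a * s / ((1 - a) * sbar s p + a * s)

set_option maxHeartbeats 2000000 in
/-- Lemma 7.1 (Lemma A.1): the transformed parameters
`s̄, p̄ = 1, q̄, ā, γ̄₁, γ̄₂, γ̄₃, ᾱ, μ̄, β̄` inherit conditions (B) and (A), and the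
relations `1/s ≤ a/p + (1-a)/q` and `1/s ≥ a(1/p - 1/n) + (1-a)/q` are preserved. -/
theorem parameter_transformation
    (s p q a g1 g2 g3 α μ β : ℝ)
    (hs : 0 < s) (hq : 0 < q) (hp : 1 ≤ p) (ha0 : 0 ≤ a) (ha1 : a ≤ 1) :
    (∀ n : ℕ, 1 ≤ n → condB n s p q a g1 g2 g3 →
      condB n (sbar s p) 1 (qbar s p q) (abar s p a)
        (g1 * s / sbar s p) (g1 * s * (1 - 1/p) + g2) (g3 * s / sbar s p)) ∧
    (∀ n : ℕ, 2 ≤ n → condA n s p q a g1 g2 g3 α μ β →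
      condA n (sbar s p) 1 (qbar s p q) (abar s p a)
        (g1 * s / sbar s p) (g1 * s * (1 - 1/p) + g2) (g3 * s / sbar s p)
        (α * s / sbar s p) (α * s * (1 - 1/p) + μ) (β * s / sbar s p)) ∧
    (1/s ≤ a/p + (1 - a)/q ↔
      1/(sbar s p) ≤ abar s p a / 1 + (1 - abar s p a)/(qbar s p q)) ∧
    (∀ n : ℕ, 1 ≤ n →
      (a * (1/p - 1/(n : ℝ)) + (1 - a)/q ≤ 1/s ↔
        abar s p a * (1 - 1/(n : ℝ)) + (1 - abar s p a)/(qbar s p q) ≤ 1/(sbar s p))) ∧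
    (1 < p → 0 < sbar s p ∧ sbar s p < s) ∧
    (0 < sbar s p ∧ sbar s p ≤ s) := by
  have hp0 : 0 < p := lt_of_lt_of_le one_pos hp
  have hk0 : 0 ≤ 1 - 1/p := by
    have h1 : 1/p ≤ 1 := by rw [div_le_one hp0]; exact hp
    linarith
  obtain ⟨k, hkdef⟩ : ∃ k : ℝ, 1 - 1/p = k := ⟨_, rfl⟩
  have hk : 0 ≤ k := hkdef ▸ hk0
  have hpinv : 1/p = 1 - k := by linarith [hkdef]
  have hap : a/p = a * (1 - k) := by rw [div_eq_mul_one_div, hpinv]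
  have ht : 0 < 1/s + k := by
    have h1 : 0 < 1/s := by positivity
    linarith
  have hr0 : 0 < 1 + s * k := by nlinarith [mul_nonneg hs.le hk]
  have hw0 : 0 < 1 + a * s * k := by nlinarith [mul_nonneg (mul_nonneg ha0 hs.le) hk]
  have hs' : s ≠ 0 := hs.ne'
  have hq' : q ≠ 0 := hq.ne'
  have ht' : 1/s + k ≠ 0 := ht.ne'
  have hr' : 1 + s * k ≠ 0 := hr0.ne'
  have hw' : 1 + a * s * k ≠ 0 := hw0.ne'
  have e1 : (1/s + k)⁻¹ = s / (1 + s * k) := by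
    rw [show 1/s + k = (1 + s*k)/s by field_simp, inv_div]
  have hsbar_eq : sbar s p = s / (1 + s * k) := by unfold sbar; rw [hkdef, e1]
  have hS0 : 0 < sbar s p := by rw [hsbar_eq]; positivity
  have hQ0 : 0 < qbar s p q := by unfold qbar; exact div_pos (mul_pos hq hS0) hs
  have K_S : 1/(sbar s p) = 1/s + k := by
    unfold sbar; rw [hkdef, one_div, inv_inv]
  have K_G : ∀ x : ℝ, x * s / sbar s p = x * (1 + s * k) := by
    intro x; rw [hsbar_eq]; field_simp
  have K_Q : 1/(qbar s p q) = (1 + s * k) * (1/q) := by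
    unfold qbar; rw [hsbar_eq]; field_simp
  have K_A : abar s p a = a * (1 + s * k) / (1 + a * s * k) := by
    unfold abar; rw [hsbar_eq]
    rw [show (1 - a) * (s / (1 + s * k)) + a * s = s * (1 + a * s * k) / (1 + s * k) by
      field_simp; ring]
    field_simp
  have K_A1 : 1 - abar s p a = (1 - a) / (1 + a * s * k) := by
    rw [K_A]; field_simp; ring
  have hA0 : 0 ≤ abar s p a := by
    rw [K_A]; exact div_nonneg (mul_nonneg ha0 hr0.le) hw0.le
  have hAle1 : abar s p a ≤ 1 := by
    have h1 : 0 ≤ 1 - abar s p a := by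
      rw [K_A1]; exact div_nonneg (by linarith) hw0.le
    linarith
  have hIff3 : 1/s ≤ a * (1 - k) + (1 - a)/q ↔
      1/(sbar s p) ≤ abar s p a / 1 + (1 - abar s p a)/(qbar s p q) := by
    have keyC : abar s p a / 1 + (1 - abar s p a)/(qbar s p q) - 1/(sbar s p)
        = ((1 + s*k)/(1 + a*s*k)) * ((a * (1 - k) + (1 - a)/q) - 1/s) := by
      rw [div_one, div_eq_mul_one_div (1 - abar s p a) (qbar s p q), K_A1, K_Q, K_A, K_S]
      field_simp
      ring
    have keyC' : (a * (1 - k) + (1 - a)/q) - 1/s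
        = ((1 + a*s*k)/(1 + s*k)) * (abar s p a / 1 + (1 - abar s p a)/(qbar s p q) - 1/(sbar s p)) := by
      rw [div_one, div_eq_mul_one_div (1 - abar s p a) (qbar s p q), K_A1, K_Q, K_A, K_S]
      field_simp
      ring
    constructor
    · intro h
      linarith [keyC, mul_nonneg (div_pos hr0 hw0).le
        (by linarith : (0:ℝ) ≤ (a * (1 - k) + (1 - a)/q) - 1/s)]
    · intro h
      linarith [keyC', mul_nonneg (div_pos hw0 hr0).le
        (by linarith : (0:ℝ) ≤ abar s p a / 1 + (1 - abar s p a)/(qbar s p q) - 1/(sbar s p))]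
  rw [hkdef, hap, hpinv]
  refine ⟨?_, ?_, hIff3, ?_, ?_, ?_⟩
  -- bullet 1 : condition (B)
  · intro n hn hcB
    have hn0 : (0:ℝ) < (n:ℝ) := by
      have : (1:ℝ) ≤ (n:ℝ) := by exact_mod_cast hn
      linarith
    have hn' : (n:ℝ) ≠ 0 := hn0.ne'
    unfold condB B1 B2 B3 B4 B5 at hcB ⊢
    obtain ⟨-, ⟨hc1, hc2, hc3⟩, hB3, hB4, hB5⟩ := hcB
    rw [hpinv] at hc2 hB3
    rw [hpinv, hap] at hB5
    have kE1 : 1/(sbar s p) + (g1 * s / sbar s p)/(n:ℝ)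
        = (1 + s*k) * (1/s + g1/(n:ℝ)) := by
      rw [K_S, K_G]; field_simp
    have kE3 : 1/(qbar s p q) + (g3 * s / sbar s p)/(n:ℝ)
        = (1 + s*k) * (1/q + g3/(n:ℝ)) := by
      rw [K_Q, K_G]; field_simp
    have kE2 : (1:ℝ)/1 + (g1 * s * k + g2 - 1)/(n:ℝ)
        = (1 - k + (g2 - 1)/(n:ℝ)) + k*s*(1/s + g1/(n:ℝ)) := by
      field_simp; ring
    have kE2' : (1:ℝ)/1 + (g1 * s * k + g2)/(n:ℝ)
        = (1 - k + g2/(n:ℝ)) + k*s*(1/s + g1/(n:ℝ)) := by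
      field_simp; ring
    refine ⟨⟨hS0, hQ0, le_refl 1, hA0, hAle1⟩, ⟨?_, ?_, ?_⟩, ?_, ?_, ?_⟩
    · linarith [kE1, mul_pos hr0 hc1]
    · linarith [kE2', hc2, mul_nonneg (mul_nonneg hk hs.le) hc1.le]
    · linarith [kE3, mul_pos hr0 hc3]
    · -- B3
      have key : (1/(sbar s p) + (g1 * s / sbar s p)/(n:ℝ))
          - (abar s p a * (1/1 + (g1 * s * k + g2 - 1)/(n:ℝ))
            + (1 - abar s p a) * (1/(qbar s p q) + (g3 * s / sbar s p)/(n:ℝ)))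
          = ((1 + s*k)/(1 + a*s*k)) *
            ((1/s + g1/(n:ℝ)) - (a * (1 - k + (g2 - 1)/(n:ℝ)) + (1 - a) * (1/q + g3/(n:ℝ)))) := by
        rw [K_A1, K_Q, K_A, K_S, K_G g1, K_G g3]
        field_simp
        ring
      have h0 : ((1 + s*k)/(1 + a*s*k)) *
          ((1/s + g1/(n:ℝ)) - (a * (1 - k + (g2 - 1)/(n:ℝ)) + (1 - a) * (1/q + g3/(n:ℝ)))) = 0 := by
        rw [hB3, sub_self, mul_zero]
      linarith [key, h0]
    · -- B4
      have key : abar s p a * (g1 * s * k + g2) + (1 - abar s p a) * (g3 * s / sbar s p)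
          - g1 * s / sbar s p
          = ((1 + s*k)/(1 + a*s*k)) * ((a * g2 + (1 - a) * g3) - g1) := by
        rw [K_A1, K_A, K_G g1, K_G g3]
        field_simp
        ring
      linarith [key, mul_nonneg (div_pos hr0 hw0).le (sub_nonneg.2 hB4)]
    · -- B5
      intro hcase
      apply hIff3.mp
      rcases hcase with h | h | ⟨h12, h23⟩
      · have ha : a = 0 := by
          rw [K_A, div_eq_zero_iff] at h
          rcases h with h' | h'
          · rcases mul_eq_zero.mp h' with h'' | h''
            · exact h''
            · exact absurd h'' hr0.ne'
          · exact absurd h' hw0.ne'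
        exact hB5 (Or.inl ha)
      · have ha : a = 1 := by
          have h' : (1 - a)/(1 + a*s*k) = 0 := by rw [← K_A1, h]; ring
          rcases div_eq_zero_iff.mp h' with h'' | h''
          · linarith
          · exact absurd h'' hw0.ne'
        exact hB5 (Or.inr (Or.inl ha))
      · have h12' : 1/s + g1/(n:ℝ) = 1 - k + (g2 - 1)/(n:ℝ) := by
          linarith [kE1, kE2, h12]
        have hmul : k*s*(1/s + g1/(n:ℝ)) = k*s*(1 - k + (g2 - 1)/(n:ℝ)) := by rw [h12']
        have h13 : (1 + s*k) * (1 - k + (g2 - 1)/(n:ℝ)) = (1 + s*k) * (1/q + g3/(n:ℝ)) := by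
          linarith [kE2, kE3, h23, hmul]
        have h23' := mul_left_cancel₀ hr0.ne' h13
        exact hB5 (Or.inr (Or.inr ⟨h12', h23'⟩))
  -- bullet 2 : condition (A)
  · intro n hn hcA
    have hn2 : (2:ℝ) ≤ (n:ℝ) := by exact_mod_cast hn
    have hn0 : (0:ℝ) < (n:ℝ) := by linarith
    have hn' : (n:ℝ) ≠ 0 := hn0.ne'
    have hm0 : (0:ℝ) < (n:ℝ) - 1 := by linarith
    have hm' : (n:ℝ) - 1 ≠ 0 := hm0.ne'
    unfold condA B1 A2 A3 A4 B4 A6 A7 A8 at hcA ⊢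
    obtain ⟨-, ⟨ha21, ha22, ha23⟩, ⟨ha31, ha32, ha33⟩, hA4, hB4, hA6, hA7, hA8⟩ := hcA
    rw [hpinv] at ha22 ha32 hA4 hA7
    rw [hpinv, hap] at hA8
    have kA2s : 1/(sbar s p) + (α * s / sbar s p)/((n:ℝ) - 1)
        = (1 + s*k) * (1/s + α/((n:ℝ) - 1)) := by
      rw [K_S, K_G]; field_simp
    have kA2q : 1/(qbar s p q) + (β * s / sbar s p)/((n:ℝ) - 1)
        = (1 + s*k) * (1/q + β/((n:ℝ) - 1)) := by
      rw [K_Q, K_G]; field_simp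
    have kF1 : 1/(sbar s p) + (g1 * s / sbar s p + α * s / sbar s p)/(n:ℝ)
        = (1 + s*k) * (1/s + (g1 + α)/(n:ℝ)) := by
      rw [K_S, K_G g1, K_G α]; field_simp
    have kFq : 1/(qbar s p q) + (g3 * s / sbar s p + β * s / sbar s p)/(n:ℝ)
        = (1 + s*k) * (1/q + (g3 + β)/(n:ℝ)) := by
      rw [K_Q, K_G g3, K_G β]; field_simp
    have kFp : (1:ℝ)/1 + (g1 * s * k + g2 + (α * s * k + μ) - 1)/(n:ℝ)
        = (1 - k + (g2 + μ - 1)/(n:ℝ)) + k*s*(1/s + (g1 + α)/(n:ℝ)) := by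
      field_simp; ring
    have keyA7 : (1/(sbar s p) + (α * s / sbar s p)/((n:ℝ) - 1))
        - (abar s p a * (1/1 + (α * s * k + μ - 1)/((n:ℝ) - 1))
          + (1 - abar s p a) * (1/(qbar s p q) + (β * s / sbar s p)/((n:ℝ) - 1)))
        = ((1 + s*k)/(1 + a*s*k)) *
          ((1/s + α/((n:ℝ) - 1))
            - (a * (1 - k + (μ - 1)/((n:ℝ) - 1)) + (1 - a) * (1/q + β/((n:ℝ) - 1)))) := by
      rw [K_A1, K_Q, K_A, K_S, K_G α, K_G β]
      field_simp
      ring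
    refine ⟨⟨hS0, hQ0, le_refl 1, hA0, hAle1⟩, ⟨?_, ?_, ?_⟩, ⟨?_, ?_, ?_⟩, ?_, ?_, ?_, ?_, ?_⟩
    · linarith [kA2s, mul_pos hr0 ha21]
    · have kA2p : (1:ℝ)/1 + (α * s * k + μ)/((n:ℝ) - 1)
          = (1 - k + μ/((n:ℝ) - 1)) + k*s*(1/s + α/((n:ℝ) - 1)) := by
        field_simp; ring
      linarith [kA2p, ha22, mul_nonneg (mul_nonneg hk hs.le) ha21.le]
    · linarith [kA2q, mul_pos hr0 ha23]
    · have kA3s : 1/(sbar s p) + (α * s / sbar s p + g1 * s / sbar s p)/(n:ℝ)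
          = (1 + s*k) * (1/s + (α + g1)/(n:ℝ)) := by
        rw [K_S, K_G α, K_G g1]; field_simp
      linarith [kA3s, mul_pos hr0 ha31]
    · have kA3p : (1:ℝ)/1 + (α * s * k + μ + (g1 * s * k + g2))/(n:ℝ)
          = (1 - k + (μ + g2)/(n:ℝ)) + k*s*(1/s + (α + g1)/(n:ℝ)) := by
        field_simp; ring
      linarith [kA3p, ha32, mul_nonneg (mul_nonneg hk hs.le) ha31.le]
    · have kA3q : 1/(qbar s p q) + (β * s / sbar s p + g3 * s / sbar s p)/(n:ℝ)
          = (1 + s*k) * (1/q + (β + g3)/(n:ℝ)) := by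
        rw [K_Q, K_G β, K_G g3]; field_simp
      linarith [kA3q, mul_pos hr0 ha33]
    · -- A4
      have key : (1/(sbar s p) + (g1 * s / sbar s p + α * s / sbar s p)/(n:ℝ))
          - (abar s p a * (1/1 + (g1 * s * k + g2 + (α * s * k + μ) - 1)/(n:ℝ))
            + (1 - abar s p a) * (1/(qbar s p q) + (g3 * s / sbar s p + β * s / sbar s p)/(n:ℝ)))
          = ((1 + s*k)/(1 + a*s*k)) *
            ((1/s + (g1 + α)/(n:ℝ))
              - (a * (1 - k + (g2 + μ - 1)/(n:ℝ)) + (1 - a) * (1/q + (g3 + β)/(n:ℝ)))) := by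
        rw [K_A1, K_Q, K_A, K_S, K_G g1, K_G α, K_G g3, K_G β]
        field_simp
        ring
      have h0 : ((1 + s*k)/(1 + a*s*k)) *
          ((1/s + (g1 + α)/(n:ℝ))
            - (a * (1 - k + (g2 + μ - 1)/(n:ℝ)) + (1 - a) * (1/q + (g3 + β)/(n:ℝ)))) = 0 := by
        rw [hA4, sub_self, mul_zero]
      linarith [key, h0]
    · -- B4
      have key : abar s p a * (g1 * s * k + g2) + (1 - abar s p a) * (g3 * s / sbar s p)
          - g1 * s / sbar s p
          = ((1 + s*k)/(1 + a*s*k)) * ((a * g2 + (1 - a) * g3) - g1) := by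
        rw [K_A1, K_A, K_G g1, K_G g3]
        field_simp
        ring
      linarith [key, mul_nonneg (div_pos hr0 hw0).le (sub_nonneg.2 hB4)]
    · -- A6
      have key : abar s p a * (g1 * s * k + g2 + (α * s * k + μ))
          + (1 - abar s p a) * (g3 * s / sbar s p + β * s / sbar s p)
          - (g1 * s / sbar s p + α * s / sbar s p)
          = ((1 + s*k)/(1 + a*s*k)) *
            ((a * (g2 + μ) + (1 - a) * (g3 + β)) - (g1 + α)) := by
        rw [K_A1, K_A, K_G g1, K_G α, K_G g3, K_G β]
        field_simp
        ring
      linarith [key, mul_nonneg (div_pos hr0 hw0).le (sub_nonneg.2 hA6)]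
    · -- A7
      linarith [keyA7, mul_nonneg (div_pos hr0 hw0).le (sub_nonneg.2 hA7)]
    · -- A8
      intro hcase
      apply hIff3.mp
      rcases hcase with h | h | ⟨h1, h2⟩ | h
      · have ha : a = 0 := by
          rw [K_A, div_eq_zero_iff] at h
          rcases h with h' | h'
          · rcases mul_eq_zero.mp h' with h'' | h''
            · exact h''
            · exact absurd h'' hr0.ne'
          · exact absurd h' hw0.ne'
        exact hA8 (Or.inl ha)
      · have ha : a = 1 := by
          have h' : (1 - a)/(1 + a*s*k) = 0 := by rw [← K_A1, h]; ring
          rcases div_eq_zero_iff.mp h' with h'' | h''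
          · linarith
          · exact absurd h'' hw0.ne'
        exact hA8 (Or.inr (Or.inl ha))
      · -- third case
        have h31 : 1/q + (g3 + β)/(n:ℝ) = 1/s + (g1 + α)/(n:ℝ) :=
          mul_left_cancel₀ hr0.ne' (by linarith [kFq, kF1, h2])
        have hmul : k*s*(1/s + (g1 + α)/(n:ℝ)) = k*s*(1/q + (g3 + β)/(n:ℝ)) := by
          rw [← h31]
        have h21 : 1 - k + (g2 + μ - 1)/(n:ℝ) = 1/q + (g3 + β)/(n:ℝ) := by
          linarith [kFp, kFq, h1, hmul]
        exact hA8 (Or.inr (Or.inr (Or.inl ⟨h21, h31⟩)))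
      · -- fourth case
        have h0 : ((1 + s*k)/(1 + a*s*k)) *
            ((1/s + α/((n:ℝ) - 1))
              - (a * (1 - k + (μ - 1)/((n:ℝ) - 1)) + (1 - a) * (1/q + β/((n:ℝ) - 1)))) = 0 := by
          linarith [keyA7, h]
        rcases mul_eq_zero.mp h0 with h' | h'
        · exact absurd h' (div_pos hr0 hw0).ne'
        · exact hA8 (Or.inr (Or.inr (Or.inr (by linarith [h']))))
  -- bullet 4 : second iff, for each n ≥ 1
  · intro n hn
    have hn0 : (0:ℝ) < (n:ℝ) := by
      have : (1:ℝ) ≤ (n:ℝ) := by exact_mod_cast hn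
      linarith
    have hn' : (n:ℝ) ≠ 0 := hn0.ne'
    have keyD : 1/(sbar s p) - (abar s p a * (1 - 1/(n:ℝ)) + (1 - abar s p a)/(qbar s p q))
        = ((1 + s*k)/(1 + a*s*k)) * (1/s - (a * ((1 - k) - 1/(n:ℝ)) + (1 - a)/q)) := by
      rw [div_eq_mul_one_div (1 - abar s p a) (qbar s p q), K_A1, K_Q, K_A, K_S]
      field_simp
      ring
    have keyD' : 1/s - (a * ((1 - k) - 1/(n:ℝ)) + (1 - a)/q)
        = ((1 + a*s*k)/(1 + s*k)) *
          (1/(sbar s p) - (abar s p a * (1 - 1/(n:ℝ)) + (1 - abar s p a)/(qbar s p q))) := by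
      rw [div_eq_mul_one_div (1 - abar s p a) (qbar s p q), K_A1, K_Q, K_A, K_S]
      field_simp
      ring
    constructor
    · intro h
      linarith [keyD, mul_nonneg (div_pos hr0 hw0).le
        (by linarith : (0:ℝ) ≤ 1/s - (a * ((1 - k) - 1/(n:ℝ)) + (1 - a)/q))]
    · intro h
      linarith [keyD', mul_nonneg (div_pos hw0 hr0).le
        (by linarith : (0:ℝ) ≤ 1/(sbar s p) -
          (abar s p a * (1 - 1/(n:ℝ)) + (1 - abar s p a)/(qbar s p q)))]
  -- bullet 5
  · intro hp1
    have hkpos : 0 < k := by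
      have h1 : 1/p < 1 := by rw [div_lt_one hp0]; exact hp1
      linarith [hkdef]
    refine ⟨hS0, ?_⟩
    rw [hsbar_eq, div_lt_iff₀ hr0]
    nlinarith [mul_pos (mul_pos hs hs) hkpos]
  -- bullet 6
  · refine ⟨hS0, ?_⟩
    rw [hsbar_eq, div_le_iff₀ hr0]
    nlinarith [mul_nonneg (mul_nonneg hs.le hs.le) hk]

end
end
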